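/- arXiv:math/0701364 — 6 statements merged into one kernel-verified Lean document; each statement's English description precedes it below -/
import Mathlib

section
/- Let 𝒢 = (G, o, R_1, …, R_n) be a functional Menger system of rank n and let H be a nonempty subset of G. Then H is a stabilizer of 𝒢 if and only if H is a quasi-stable l-unitary normal v-complex and there exists a subset U of G with H ⊆ U, R_i U ⊆ H and R_i(G∖U) ⊆ G∖U for every i ∈ {1,…,n}, such that for all x, y, u ∈ G, w̄ ∈ G^n, t ∈ T_n(G) and i ∈ {1,…,n}: (i) if x ∈ H, y ∈ H and t(x) ∈ U, then t(y) ∈ U; (ii) if x = y[R_1x…R_nx] ∈ U and u[w̄|_i y] ∈ H then u[w̄|_i x] ∈ H, and also (the case of the empty outer symbol) if x = y[R_1x…R_nx] ∈ U and y ∈ H then x ∈ H; (iii) if x = y[R_1x…R_nx] ∈ U and u[w̄|_i y] ∈ U then u[w̄|_i x] ∈ U, and also if x = y[R_1x…R_nx] ∈ U and y ∈ U then x ∈ U. -/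
universe u

/-- A functional Menger system of rank `n`: an `(n+1)`-ary operation `o`
(written `x[y₁…yₙ]` in the paper) and `n` unary operations `R i`,
satisfying axioms A1–A7. -/
structure MengerSystem (n : ℕ) (G : Type u) where
  o : G → (Fin n → G) → G
  R : Fin n → G → G
  A1 : ∀ (x : G) (y z : Fin n → G),
    o (o x y) z = o x fun i => o (y i) z
  A2 : ∀ x : G, o x (fun i => R i x) = x
  A3 : ∀ (x : G) (u : Fin n → G) (i : Fin n) (z y : G),
    o (o x (Function.update u i z)) (fun j => R j y)
      = o x (Function.update u i (o z fun j => R j y))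
  A4 : ∀ (i : Fin n) (x y : G),
    R i (o x fun j => R j y) = o (R i x) fun j => R j y
  A5 : ∀ (x y z : G),
    o (o x fun j => R j y) (fun j => R j z)
      = o (o x fun j => R j z) (fun j => R j y)
  A6 : ∀ (i k : Fin n) (x : G) (y : Fin n → G),
    R i (o x y) = R i (o (R k x) y)
  A7 : ∀ (i : Fin n) (x : G) (y : Fin n → G),
    o (R i x) y = o (y i) fun j => R j (o x y)

namespace MengerSystem

variable {n : ℕ} {G : Type u}

/-- `T_n(G)`: the least set of transformations of `G` containing the identity and
closed under `t ↦ (x ↦ a[b̄|ᵢ t x])` and `t ↦ (x ↦ Rᵢ (t x))`. -/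
inductive IsTn (M : MengerSystem n G) : (G → G) → Prop
  | id : IsTn M id
  | op (t : G → G) (a : G) (b : Fin n → G) (i : Fin n) :
      IsTn M t → IsTn M fun x => M.o a (Function.update b i (t x))
  | proj (t : G → G) (i : Fin n) :
      IsTn M t → IsTn M fun x => M.R i (t x)

/-- quasi-stable: `x ∈ H → x[x…x] ∈ H`. -/
def QuasiStable (M : MengerSystem n G) (H : Set G) : Prop :=
  ∀ x ∈ H, M.o x (fun _ => x) ∈ H

/-- l-unitary: `x[y…y] ∈ H ∧ y ∈ H → x ∈ H`. -/
def LUnitary (M : MengerSystem n G) (H : Set G) : Prop :=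
  ∀ x y : G, M.o x (fun _ => y) ∈ H → y ∈ H → x ∈ H

/-- normal v-complex: `x, y ∈ H ∧ t x ∈ H → t y ∈ H` for all `t ∈ T_n(G)`. -/
def NormalVComplex (M : MengerSystem n G) (H : Set G) : Prop :=
  ∀ t : G → G, M.IsTn t → ∀ x ∈ H, ∀ y ∈ H, t x ∈ H → t y ∈ H

/-- stable: `x, y₁, …, yₙ ∈ H → x[y₁…yₙ] ∈ H`. -/
def Stable (M : MengerSystem n G) (H : Set G) : Prop :=
  ∀ (x : G) (y : Fin n → G), x ∈ H → (∀ i, y i ∈ H) → M.o x y ∈ H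

/-- v-unitary: `x[y₁…yₙ] ∈ H ∧ y₁, …, yₙ ∈ H → x ∈ H`. -/
def VUnitary (M : MengerSystem n G) (H : Set G) : Prop :=
  ∀ (x : G) (y : Fin n → G), M.o x y ∈ H → (∀ i, y i ∈ H) → x ∈ H

/-- l-ideal: `x[y₁…yₙ] ∈ H` whenever some `yᵢ ∈ H`. -/
def LIdeal (M : MengerSystem n G) (H : Set G) : Prop :=
  ∀ (x : G) (y : Fin n → G), (∃ i, y i ∈ H) → M.o x y ∈ H

/-- the order `x ≤ y ↔ x = y[R₁x…Rₙx]` (the relation ζ). -/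
def le (M : MengerSystem n G) (x y : G) : Prop :=
  x = M.o y fun i => M.R i x

/-- the quasi-order `x ⊏ y ↔ R₁x ≤ R₁y` (the relation χ). -/
def sub (M : MengerSystem n G) [NeZero n] (x y : G) : Prop :=
  M.le (M.R 0 x) (M.R 0 y)

/-- v-regular binary relation. -/
def VRegular (M : MengerSystem n G) (ρ : G → G → Prop) : Prop :=
  ∀ (z : G) (x y : Fin n → G), (∀ i, ρ (x i) (y i)) → ρ (M.o z x) (M.o z y)

end MengerSystem

/-- An `n`-place function on `A`: a partial map from `Aⁿ` to `A`. -/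
def NPlace (n : ℕ) (A : Type u) : Type u := (Fin n → A) → Part A

namespace NPlace

variable {n : ℕ} {A : Type u}

/-- Menger composition `f[g₁…gₙ]` of `n`-place functions. -/
def comp (f : NPlace n A) (g : Fin n → NPlace n A) : NPlace n A :=
  fun a =>
    (⟨∀ i, (g i a).Dom, fun h i => (g i a).get (h i)⟩ : Part (Fin n → A)).bind f

/-- `Rᵢ f`: same domain as `f`, value `(Rᵢ f)(a₁,…,aₙ) = aᵢ`. -/
def Ri (i : Fin n) (f : NPlace n A) : NPlace n A :=
  fun a => (f a).map fun _ => a i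

/-- Set-theoretic intersection of two `n`-place functions (as sets of pairs). -/
def inter (f g : NPlace n A) : NPlace n A :=
  fun a => ⟨(f a).Dom ∧ f a = g a, fun h => (f a).get h.1⟩

end NPlace

/-- A representation of a functional Menger system by `n`-place functions. -/
def MengerSystem.IsRep {n : ℕ} {G : Type u} (M : MengerSystem n G) {A : Type u}
    (P : G → NPlace n A) : Prop :=
  (∀ (x : G) (y : Fin n → G), P (M.o x y) = NPlace.comp (P x) fun i => P (y i)) ∧
  (∀ (i : Fin n) (x : G), P (M.R i x) = NPlace.Ri i (P x))

/-- A nonempty `H ⊆ G` is a stabilizer of `M` if there are a representation `P`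
on some set `A` and a point `a ∈ A` with `H = {g | P g (a,…,a) = a}`. -/
def MengerSystem.IsStabilizer {n : ℕ} {G : Type u} (M : MengerSystem n G)
    (H : Set G) : Prop :=
  ∃ (A : Type u) (P : G → NPlace n A) (a : A),
    M.IsRep P ∧ H = {g : G | a ∈ P g fun _ => a}

namespace NPlace

variable {n : ℕ} {A : Type u}

lemma mem_tup (p : Fin n → Part A) (c : Fin n → A) :
    c ∈ (⟨∀ i, (p i).Dom, fun h i => (p i).get (h i)⟩ : Part (Fin n → A)) ↔
      ∀ i, c i ∈ p i := by
  rw [Part.mem_mk_iff]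
  constructor
  · rintro ⟨h, rfl⟩ i; exact Part.get_mem (h i)
  · intro h
    refine ⟨fun i => Part.dom_iff_mem.mpr ⟨c i, h i⟩, funext fun i => Part.get_eq_of_mem (h i) _⟩

lemma mem_comp (f : NPlace n A) (g : Fin n → NPlace n A) (v : Fin n → A) (b : A) :
    b ∈ NPlace.comp f g v ↔ ∃ c : Fin n → A, (∀ i, c i ∈ g i v) ∧ b ∈ f c := by
  unfold NPlace.comp
  refine (Part.mem_bind_iff).trans ?_
  constructor
  · rintro ⟨c, hc, hb⟩; exact ⟨c, (mem_tup _ _).mp hc, hb⟩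
  · rintro ⟨c, hc, hb⟩; exact ⟨c, (mem_tup _ _).mpr hc, hb⟩

end NPlace

namespace MengerSystem

variable {n : ℕ} {G : Type u} (M : MengerSystem n G)

lemma oRR (i : Fin n) (x : G) : M.o (M.R i x) (fun j => M.R j x) = M.R i x := by
  rw [← M.A4, M.A2]

lemma RR (j i : Fin n) (x : G) : M.R j (M.R i x) = M.R j x := by
  conv_lhs => rw [← M.oRR i x]
  rw [← M.A6 j i x fun k => M.R k x, M.A2]

lemma tn_comp {t s : G → G} (ht : M.IsTn t) (hs : M.IsTn s) :
    M.IsTn (fun x => t (s x)) := by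
  induction ht with
  | id => exact hs
  | op t' a b i h ih => exact .op _ a b i ih
  | proj t' i h ih => exact .proj _ i ih

lemma le_op {p q : G} (u : G) (w : Fin n → G) (i : Fin n) (h : M.le p q) :
    M.le (M.o u (Function.update w i p)) (M.o u (Function.update w i q)) := by
  have h' : p = M.o q fun j => M.R j p := h
  have hsp : M.o (M.o u (Function.update w i p)) (fun j => M.R j p)
      = M.o u (Function.update w i p) := by
    rw [M.A3, M.A2]
  have hRs : ∀ j, M.R j (M.o u (Function.update w i p))
      = M.o (M.R j (M.o u (Function.update w i p))) (fun k => M.R k p) := by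
    intro j
    conv_lhs => rw [← hsp]
    rw [M.A4]
  have hqp : M.o q (fun j => M.R j (M.o u (Function.update w i p)))
      = M.o p (fun j => M.R j (M.o u (Function.update w i p))) := by
    conv_lhs => rw [show (fun j => M.R j (M.o u (Function.update w i p)))
      = fun j => M.o (M.R j (M.o u (Function.update w i p))) (fun k => M.R k p)
      from funext hRs]
    rw [← M.A1, M.A5, ← h']
  show M.o u (Function.update w i p)
      = M.o (M.o u (Function.update w i q)) fun j => M.R j (M.o u (Function.update w i p))
  rw [M.A3, hqp, ← M.A3, M.A2]

lemma le_R (i : Fin n) {p q : G} (h : M.le p q) : M.le (M.R i p) (M.R i q) := by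
  show M.R i p = M.o (M.R i q) fun j => M.R j (M.R i p)
  have h' : p = M.o q fun j => M.R j p := h
  rw [show (fun j => M.R j (M.R i p)) = fun j => M.R j p from funext fun j => M.RR j i p]
  conv_lhs => rw [h']
  exact M.A4 i q p

lemma le_t {t : G → G} (ht : M.IsTn t) {p q : G} (h : M.le p q) : M.le (t p) (t q) := by
  induction ht with
  | id => exact h
  | op t' a b i h' ih => exact M.le_op a b i ih
  | proj t' i h' ih => exact M.le_R i ih

/-- The "same germ at the base point" relation determined by `H` and `U`. -/
def germ (H U : Set G) (x y : G) : Prop :=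
  ∀ t : G → G, M.IsTn t → ((t x ∈ H ↔ t y ∈ H) ∧ (t x ∈ U ↔ t y ∈ U))

lemma germ_refl (H U : Set G) (x : G) : M.germ H U x x :=
  fun _ _ => ⟨Iff.rfl, Iff.rfl⟩

lemma germ_symm {H U : Set G} {x y : G} (h : M.germ H U x y) : M.germ H U y x :=
  fun t ht => ⟨((h t ht).1).symm, ((h t ht).2).symm⟩

lemma germ_trans {H U : Set G} {x y z : G} (h1 : M.germ H U x y) (h2 : M.germ H U y z) :
    M.germ H U x z :=
  fun t ht => ⟨((h1 t ht).1).trans ((h2 t ht).1), ((h1 t ht).2).trans ((h2 t ht).2)⟩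

lemma germ_H {H U : Set G} {x y : G} (h : M.germ H U x y) : x ∈ H ↔ y ∈ H :=
  (h id .id).1

lemma germ_U {H U : Set G} {x y : G} (h : M.germ H U x y) : x ∈ U ↔ y ∈ U :=
  (h id .id).2

lemma germ_op {H U : Set G} {p q : G} (u : G) (w : Fin n → G) (i : Fin n)
    (h : M.germ H U p q) :
    M.germ H U (M.o u (Function.update w i p)) (M.o u (Function.update w i q)) := by
  intro t ht
  exact h (fun x => t (M.o u (Function.update w i x)))
    (M.tn_comp ht (.op id u w i .id))

lemma germ_tuple {H U : Set G} (g : G) (p q : Fin n → G)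
    (hpq : ∀ i, M.germ H U (p i) (q i)) : M.germ H U (M.o g p) (M.o g q) := by
  suffices h : ∀ k : ℕ, M.germ H U (M.o g p)
      (M.o g (fun j => if (j : ℕ) < k then q j else p j)) by
    have hn := h n
    rwa [show (fun j : Fin n => if (j : ℕ) < n then q j else p j) = q
      from funext fun j => if_pos j.isLt] at hn
  intro k
  induction k with
  | zero =>
    rw [show (fun j : Fin n => if (j : ℕ) < 0 then q j else p j) = p
      from funext fun j => if_neg (Nat.not_lt_zero _)]
    exact M.germ_refl H U _
  | succ k ih =>
    by_cases hk : k < n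
    · set jk : Fin n := ⟨k, hk⟩ with hjk
      have e1 : (fun j : Fin n => if (j : ℕ) < k then q j else p j)
          = Function.update (fun j : Fin n => if (j : ℕ) < k + 1 then q j else p j)
              jk (p jk) := by
        funext j
        by_cases hj : j = jk
        · subst hj
          rw [Function.update_self, if_neg (by simp [hjk])]
        · rw [Function.update_of_ne hj]
          have hne : (j : ℕ) ≠ k := fun hc => hj (Fin.ext hc)
          by_cases h2 : (j : ℕ) < k
          · rw [if_pos h2, if_pos (Nat.lt_succ_of_lt h2)]
          · rw [if_neg h2, if_neg (fun hc =>
              h2 (lt_of_le_of_ne (Nat.lt_succ_iff.mp hc) hne))]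
      have e2 : Function.update (fun j : Fin n => if (j : ℕ) < k + 1 then q j else p j)
          jk (q jk) = (fun j : Fin n => if (j : ℕ) < k + 1 then q j else p j) := by
        rw [show q jk = (fun j : Fin n => if (j : ℕ) < k + 1 then q j else p j) jk
          from (if_pos (by simp [hjk])).symm]
        exact Function.update_eq_self _ _
      refine M.germ_trans ih ?_
      have step := M.germ_op g (fun j : Fin n => if (j : ℕ) < k + 1 then q j else p j)
        jk (hpq jk)
      rw [e2] at step
      rw [e1]
      exact step
    · rw [show (fun j : Fin n => if (j : ℕ) < k + 1 then q j else p j)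
        = fun j : Fin n => if (j : ℕ) < k then q j else p j from funext fun j => by
          have hj : (j : ℕ) < k := lt_of_lt_of_le j.isLt (le_of_not_gt hk)
          rw [if_pos hj, if_pos (Nat.lt_succ_of_lt hj)]]
      exact ih

end MengerSystem

namespace MengerSystem

variable {n : ℕ} {G : Type u}

lemma suff (M : MengerSystem n G) {H U : Set G} {h₀ : G} (hh₀ : h₀ ∈ H) (j₀ : Fin n)
    (hq : M.QuasiStable H) (hl : M.LUnitary H) (hn : M.NormalVComplex H)
    (hHU : H ⊆ U)
    (hRU : ∀ i : Fin n, ∀ x ∈ U, M.R i x ∈ H)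
    (hRUc : ∀ i : Fin n, ∀ x ∈ Uᶜ, M.R i x ∈ Uᶜ)
    (hi : ∀ (x y : G) (t : G → G), M.IsTn t → x ∈ H → y ∈ H → t x ∈ U → t y ∈ U)
    (hf2e : ∀ x y : G, x = M.o y (fun j => M.R j x) → x ∈ U → y ∈ H → x ∈ H)
    (hf3 : ∀ (x y u : G) (w : Fin n → G) (i : Fin n),
      x = M.o y (fun j => M.R j x) → x ∈ U →
      M.o u (Function.update w i y) ∈ U → M.o u (Function.update w i x) ∈ U) :
    M.IsStabilizer H := by
  classical
  -- basic consequences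
  have hUc : ∀ (i : Fin n) (x : G), M.R i x ∈ U → x ∈ U := by
    intro i x hx
    by_contra hc
    exact hRUc i x hc hx
  have gHH : ∀ {x y : G}, x ∈ H → y ∈ H → M.germ H U x y := by
    intro x y hx hy t ht
    exact ⟨⟨fun h => hn t ht x hx y hy h, fun h => hn t ht y hy x hx h⟩,
      ⟨fun h => hi x y t ht hx hy h, fun h => hi y x t ht hy hx h⟩⟩
  have diagH : ∀ {g h : G}, g ∈ H → h ∈ H → M.o g (fun _ => h) ∈ H := by
    intro g h hg hh
    have h1 := hq g hg
    exact (M.germ_H (M.germ_tuple g (fun _ => g) (fun _ => h)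
      (fun _ => gHH hg hh))).mp h1
  -- alpha : components of a "defined" composition are "defined"
  have alpha : ∀ {g : G} {y : Fin n → G}, M.o g y ∈ U → ∀ j, y j ∈ U := by
    intro g y hw j
    have h1 : M.R j (M.o g y) = M.o (M.R j (y j)) (fun k => M.R k (M.o g y)) := by
      calc M.R j (M.o g y) = M.R j (M.o (M.R j g) y) := M.A6 j j g y
        _ = M.R j (M.o (y j) (fun k => M.R k (M.o g y))) := by rw [M.A7]
        _ = M.o (M.R j (y j)) (fun k => M.R k (M.o g y)) := M.A4 j (y j) (M.o g y)
    have h2 : M.o (M.R j (y j)) (fun k => M.R k (M.o g y)) ∈ H := by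
      rw [← h1]; exact hRU j _ hw
    have h3 : M.o (M.R j (y j)) (fun _ => h₀) ∈ H :=
      (M.germ_H (M.germ_tuple _ _ _ (fun k => gHH (hRU k _ hw) hh₀))).mp h2
    have h4 : M.R j (y j) ∈ H := hl _ h₀ h3 hh₀
    exact hUc j _ (hHU h4)
  -- headU : if all arguments are in H and the composition is defined, the head is defined
  have headU : ∀ {y : G} {p : Fin n → G}, (∀ j, p j ∈ H) → M.o y p ∈ U → y ∈ U := by
    intro y p hp hc
    have e : M.o (M.R j₀ y) p = M.o (p j₀) (fun k => M.R k (M.o y p)) := M.A7 j₀ y p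
    have m1 : M.o (p j₀) (fun _ => h₀) ∈ H := diagH (hp j₀) hh₀
    have m2 : M.o (p j₀) (fun k => M.R k (M.o y p)) ∈ H :=
      (M.germ_H (M.germ_tuple _ _ _ (fun k => gHH hh₀ (hRU k _ hc)))).mp m1
    have m3 : M.o (M.R j₀ y) p ∈ H := by rw [e]; exact m2
    have m4 : M.o (M.R j₀ y) (fun _ => h₀) ∈ H :=
      (M.germ_H (M.germ_tuple _ _ _ (fun k => gHH (hp k) hh₀))).mp m3
    have m5 : M.R j₀ y ∈ H := hl _ h₀ m4 hh₀
    exact hUc j₀ _ (hHU m5)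
  -- E1, E2 : upward transfer along ≤
  have E1 : ∀ {x y : G}, M.le x y → x ∈ H → y ∈ H := by
    intro x y hle hx
    have hx' : M.o y (fun j => M.R j x) ∈ H := by rw [← hle]; exact hx
    have h1 : M.o y (fun _ => h₀) ∈ H :=
      (M.germ_H (M.germ_tuple _ _ _ (fun j => gHH (hRU j x (hHU hx)) hh₀))).mp hx'
    exact hl y h₀ h1 hh₀
  have E2 : ∀ {x y : G}, M.le x y → x ∈ U → y ∈ U := by
    intro x y hle hx
    have hx' : M.o y (fun j => M.R j x) ∈ U := by rw [← hle]; exact hx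
    have h1 : M.o y (fun _ => h₀) ∈ U :=
      (M.germ_U (M.germ_tuple _ _ _ (fun j => gHH (hRU j x hx) hh₀))).mp hx'
    exact headU (fun _ => hh₀) h1
  -- downward transfer (C1)
  have C1U : ∀ {x y : G}, M.le x y → x ∈ U → ∀ t : G → G, M.IsTn t →
      t y ∈ U → t x ∈ U := by
    intro x y hle hxU t ht
    induction ht with
    | id => intro _; exact hxU
    | op t' a' b' i' ht' ih =>
      intro h
      have h1 : t' y ∈ U := by
        have := alpha h i'
        rwa [Function.update_self] at this
      have h2 : t' x ∈ U := ih h1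
      exact hf3 (t' x) (t' y) a' b' i' (M.le_t ht' hle) h2 h
    | proj t' i' ht' ih =>
      intro h
      have h1 : t' y ∈ U := hUc i' _ h
      exact hHU (hRU i' _ (ih h1))
  have germ_of_le : ∀ {x y : G}, M.le x y → x ∈ U → M.germ H U x y := by
    intro x y hle hxU t ht
    have hmono : M.le (t x) (t y) := M.le_t ht hle
    refine ⟨⟨fun h => E1 hmono h, fun h => ?_⟩, ⟨fun h => E2 hmono h,
      fun h => C1U hle hxU t ht h⟩⟩
    exact hf2e (t x) (t y) hmono (C1U hle hxU t ht (hHU h)) h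
  -- beta : domains of R i g and g agree
  have beta : ∀ (i : Fin n) (g : G) (x : Fin n → G),
      (M.o (M.R i g) x ∈ U ↔ M.o g x ∈ U) := by
    intro i g x
    rw [M.A7 i g x]
    constructor
    · intro hv
      exact hUc j₀ _ (alpha hv j₀)
    · intro hw
      have hxU : x i ∈ U := alpha hw i
      have g1 : M.germ H U (M.o (x i) (fun k => M.R k (M.o g x))) (M.o (x i) (fun _ => h₀)) :=
        M.germ_tuple _ _ _ (fun k => gHH (hRU k _ hw) hh₀)
      have g2 : M.germ H U (M.o (x i) (fun k => M.R k (x i))) (M.o (x i) (fun _ => h₀)) :=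
        M.germ_tuple _ _ _ (fun k => gHH (hRU k _ hxU) hh₀)
      have h2 : M.o (x i) (fun _ => h₀) ∈ U := by
        rw [← M.germ_U g2, M.A2]; exact hxU
      rw [M.germ_U g1]; exact h2
  -- gamma : value of R i g
  have gamma : ∀ (i : Fin n) (g : G) (x : Fin n → G), M.o g x ∈ U →
      M.germ H U (M.o (M.R i g) x) (x i) := by
    intro i g x hw
    have hvU : M.o (M.R i g) x ∈ U := (beta i g x).mpr hw
    rw [M.A7 i g x] at hvU ⊢
    have hle : M.le (M.o (x i) (fun k => M.R k (M.o g x))) (x i) := by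
      show M.o (x i) (fun k => M.R k (M.o g x))
        = M.o (x i) fun j => M.R j (M.o (x i) (fun k => M.R k (M.o g x)))
      conv_rhs => rw [show (fun j => M.R j (M.o (x i) (fun k => M.R k (M.o g x))))
        = fun j => M.o (M.R j (x i)) (fun k => M.R k (M.o g x))
        from funext fun j => M.A4 j (x i) (M.o g x)]
      rw [← M.A1, M.A2]
    exact germ_of_le hle hvU
  -- the setoid and the representation
  let s : Setoid G := ⟨M.germ H U, ⟨M.germ_refl H U, M.germ_symm, M.germ_trans⟩⟩
  have out_germ : ∀ z : G, M.germ H U (Quotient.out (Quotient.mk s z)) z :=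
    fun z => by have h := Quotient.exact (Quotient.out_eq (Quotient.mk s z)); exact h
  refine ⟨Quotient s,
    fun g v => ⟨M.o g (fun i => Quotient.out (v i)) ∈ U,
      fun _ => Quotient.mk s (M.o g (fun i => Quotient.out (v i)))⟩,
    Quotient.mk s h₀, ⟨?_, ?_⟩, ?_⟩
  · -- composition law
    intro g h
    funext v
    apply Part.ext
    intro b
    refine Iff.trans ?_ (NPlace.mem_comp _ _ _ _).symm
    simp only [Part.mem_mk_iff]
    constructor
    · rintro ⟨hd, rfl⟩
      have hd' : M.o g (fun i => M.o (h i) (fun j => Quotient.out (v j))) ∈ U := by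
        rw [← M.A1]; exact hd
      have hyU : ∀ i, M.o (h i) (fun j => Quotient.out (v j)) ∈ U := alpha hd'
      refine ⟨fun i => Quotient.mk s (M.o (h i) (fun j => Quotient.out (v j))),
        fun i => ⟨hyU i, rfl⟩, ?_, ?_⟩
      · have g1 : M.germ H U
            (M.o g (fun i => Quotient.out (Quotient.mk s (M.o (h i) (fun j => Quotient.out (v j))))))
            (M.o g (fun i => M.o (h i) (fun j => Quotient.out (v j)))) :=
          M.germ_tuple _ _ _ (fun i => out_germ _)
        rw [M.germ_U g1]; exact hd'
      · refine Quotient.sound ?_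
        refine M.germ_trans (M.germ_tuple _ _ _ (fun i => out_germ _)) ?_
        rw [← M.A1]
        exact M.germ_refl H U _
    · rintro ⟨c, hc, hd, rfl⟩
      have hcv : ∀ i, c i = Quotient.mk s (M.o (h i) (fun j => Quotient.out (v j))) := by
        intro i
        obtain ⟨_, he⟩ := hc i
        exact he.symm
      have g1 : M.germ H U
          (M.o g (fun i => Quotient.out (c i)))
          (M.o g (fun i => M.o (h i) (fun j => Quotient.out (v j)))) := by
        refine M.germ_tuple _ _ _ (fun i => ?_)
        rw [hcv i]
        exact out_germ _
      have hd' : M.o g (fun i => M.o (h i) (fun j => Quotient.out (v j))) ∈ U :=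
        (M.germ_U g1).mp hd
      refine ⟨by rw [M.A1]; exact hd', ?_⟩
      refine Quotient.sound (M.germ_trans ?_ (M.germ_symm g1))
      rw [M.A1]
      exact M.germ_refl H U _
  · -- projection law
    intro i g
    funext v
    apply Part.ext
    intro b
    simp only [NPlace.Ri, Part.mem_map_iff, Part.mem_mk_iff]
    constructor
    · rintro ⟨hd, rfl⟩
      have hw : M.o g (fun j => Quotient.out (v j)) ∈ U := (beta i g _).mp hd
      refine ⟨Quotient.mk s (M.o g (fun j => Quotient.out (v j))), ⟨hw, rfl⟩, ?_⟩
      have := gamma i g (fun j => Quotient.out (v j)) hw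
      calc v i = Quotient.mk s (Quotient.out (v i)) := (Quotient.out_eq _).symm
        _ = Quotient.mk s (M.o (M.R i g) (fun j => Quotient.out (v j))) :=
          (Quotient.sound this).symm
    · rintro ⟨a', ⟨hw, rfl⟩, rfl⟩
      refine ⟨(beta i g _).mpr hw, ?_⟩
      have := gamma i g (fun j => Quotient.out (v j)) hw
      calc Quotient.mk s (M.o (M.R i g) (fun j => Quotient.out (v j)))
          = Quotient.mk s (Quotient.out (v i)) := Quotient.sound this
        _ = v i := Quotient.out_eq _
  · -- the stabilizer is exactly H
    ext g
    simp only [Set.mem_setOf_eq, Part.mem_mk_iff]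
    have hout : Quotient.out (Quotient.mk s h₀) ∈ H :=
      (M.germ_H (out_germ h₀)).mpr hh₀
    constructor
    · intro hg
      have h1 : M.o g (fun _ => Quotient.out (Quotient.mk s h₀)) ∈ H := diagH hg hout
      exact ⟨hHU h1, Quotient.sound (gHH h1 hh₀)⟩
    · rintro ⟨hd, he⟩
      have h1 : M.germ H U (M.o g (fun _ => Quotient.out (Quotient.mk s h₀))) h₀ :=
        Quotient.exact he
      have h2 : M.o g (fun _ => Quotient.out (Quotient.mk s h₀)) ∈ H :=
        (M.germ_H h1).mpr hh₀
      exact hl g _ h2 hout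

end MengerSystem

/-- **Theorem 1.** A nonempty `H ⊆ G` is a stabilizer of a functional Menger
system of rank `n` iff it is a quasi-stable l-unitary normal v-complex contained
in some `U ⊆ G` with `Rᵢ U ⊆ H`, `Rᵢ (G∖U) ⊆ G∖U`, satisfying (f-1), (f-2), (f-3)
(including the cases with empty outer symbol). -/
theorem stabilizer_iff {n : ℕ} {G : Type u} (M : MengerSystem n G)
    (H : Set G) (hH : H.Nonempty) :
    M.IsStabilizer H ↔
      (M.QuasiStable H ∧ M.LUnitary H ∧ M.NormalVComplex H ∧
        ∃ U : Set G, H ⊆ U ∧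
          (∀ i : Fin n, ∀ x ∈ U, M.R i x ∈ H) ∧
          (∀ i : Fin n, ∀ x ∈ Uᶜ, M.R i x ∈ Uᶜ) ∧
          (∀ (x y : G) (t : G → G), M.IsTn t →
            x ∈ H → y ∈ H → t x ∈ U → t y ∈ U) ∧
          (∀ (x y u : G) (w : Fin n → G) (i : Fin n),
            x = M.o y (fun j => M.R j x) → x ∈ U →
            M.o u (Function.update w i y) ∈ H →
            M.o u (Function.update w i x) ∈ H) ∧
          (∀ x y : G, x = M.o y (fun j => M.R j x) → x ∈ U → y ∈ H → x ∈ H) ∧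
          (∀ (x y u : G) (w : Fin n → G) (i : Fin n),
            x = M.o y (fun j => M.R j x) → x ∈ U →
            M.o u (Function.update w i y) ∈ U →
            M.o u (Function.update w i x) ∈ U) ∧
          (∀ x y : G, x = M.o y (fun j => M.R j x) → x ∈ U → y ∈ U → x ∈ U)) := by
  constructor
  · rintro ⟨A, P, a, ⟨hc, hr⟩, rfl⟩
    -- `key` : transformations from T_n(G) take the same value at all points of H
    have key : ∀ t : G → G, M.IsTn t → ∀ x y : G, a ∈ P x (fun _ => a) →
        a ∈ P y (fun _ => a) → P (t x) (fun _ => a) = P (t y) (fun _ => a) := by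
      intro t ht
      induction ht with
      | id =>
        intro x y hx hy
        show P x (fun _ => a) = P y (fun _ => a)
        rw [Part.eq_some_iff.mpr hx, Part.eq_some_iff.mpr hy]
      | op t' u b i ht' ih =>
        intro x y hx hy
        rw [hc, hc]
        apply Part.ext; intro b'
        rw [NPlace.mem_comp, NPlace.mem_comp]
        have hjj : ∀ j, P (Function.update b i (t' x) j) (fun _ => a)
            = P (Function.update b i (t' y) j) (fun _ => a) := by
          intro j
          by_cases hj : j = i
          · subst hj
            rw [Function.update_self, Function.update_self]
            exact ih x y hx hy
          · rw [Function.update_of_ne hj, Function.update_of_ne hj]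
        constructor
        · rintro ⟨c, hcj, hb⟩; exact ⟨c, fun j => (hjj j) ▸ hcj j, hb⟩
        · rintro ⟨c, hcj, hb⟩; exact ⟨c, fun j => (hjj j).symm ▸ hcj j, hb⟩
      | proj t' i ht' ih =>
        intro x y hx hy
        rw [hr, hr]
        simp only [NPlace.Ri]
        rw [ih x y hx hy]
    -- exy : if x ≤ y and x is "defined", then P x and P y agree at the base point
    have exy : ∀ x y : G, x = M.o y (fun j => M.R j x) →
        (P x (fun _ => a)).Dom → P x (fun _ => a) = P y (fun _ => a) := by
      intro x y hxy hdx
      apply Part.ext; intro b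
      constructor
      · intro hb
        rw [hxy] at hb
        rw [hc, NPlace.mem_comp] at hb
        obtain ⟨c, hcj, hbc⟩ := hb
        have hce : c = fun _ => a := by
          funext j
          have h1 := hcj j
          rw [hr] at h1
          simp only [NPlace.Ri, Part.mem_map_iff] at h1
          obtain ⟨_, _, he⟩ := h1
          exact he.symm
        rwa [hce] at hbc
      · intro hb
        have h1 : b ∈ P (M.o y fun j => M.R j x) (fun _ => a) := by
          rw [hc, NPlace.mem_comp]
          refine ⟨fun _ => a, fun j => ?_, hb⟩
          rw [hr]
          simp only [NPlace.Ri, Part.mem_map_iff]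
          exact ⟨(P x _).get hdx, Part.get_mem hdx, by trivial⟩
        rwa [← hxy] at h1
    have eqo : ∀ (x y u' : G) (w : Fin n → G) (i : Fin n),
        x = M.o y (fun j => M.R j x) → (P x (fun _ => a)).Dom →
        P (M.o u' (Function.update w i x)) (fun _ => a)
          = P (M.o u' (Function.update w i y)) (fun _ => a) := by
      intro x y u' w i hxy hdx
      have e := exy x y hxy hdx
      rw [hc, hc]
      apply Part.ext; intro b
      rw [NPlace.mem_comp, NPlace.mem_comp]
      have hjj : ∀ j, P (Function.update w i x j) (fun _ => a)
          = P (Function.update w i y j) (fun _ => a) := by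
        intro j
        by_cases hj : j = i
        · subst hj; rw [Function.update_self, Function.update_self]; exact e
        · rw [Function.update_of_ne hj, Function.update_of_ne hj]
      constructor
      · rintro ⟨c, hcj, hb⟩; exact ⟨c, fun j => (hjj j) ▸ hcj j, hb⟩
      · rintro ⟨c, hcj, hb⟩; exact ⟨c, fun j => (hjj j).symm ▸ hcj j, hb⟩
    refine ⟨?_, ?_, ?_, {g : G | (P g fun _ => a).Dom}, ?_, ?_, ?_, ?_, ?_, ?_, ?_, ?_⟩
    · -- quasi-stable
      intro x hx
      simp only [Set.mem_setOf_eq] at hx ⊢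
      rw [hc, NPlace.mem_comp]
      exact ⟨fun _ => a, fun _ => hx, hx⟩
    · -- l-unitary
      intro x y hxy hy
      simp only [Set.mem_setOf_eq] at hxy hy ⊢
      rw [hc, NPlace.mem_comp] at hxy
      obtain ⟨c, hcj, hb⟩ := hxy
      have hce : c = fun _ => a := funext fun i => Part.mem_unique (hcj i) hy
      rwa [hce] at hb
    · -- normal v-complex
      intro t ht x hx y hy htx
      simp only [Set.mem_setOf_eq] at hx hy htx ⊢
      rw [← key t ht x y hx hy]
      exact htx
    · -- H ⊆ U
      intro g hg
      simp only [Set.mem_setOf_eq] at hg ⊢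
      exact Part.dom_iff_mem.mpr ⟨a, hg⟩
    · -- R i U ⊆ H
      intro i x hx
      simp only [Set.mem_setOf_eq] at hx ⊢
      rw [hr]
      simp only [NPlace.Ri, Part.mem_map_iff]
      exact ⟨(P x _).get hx, Part.get_mem hx, by trivial⟩
    · -- R i (G ∖ U) ⊆ G ∖ U
      intro i x hx
      simp only [Set.mem_compl_iff, Set.mem_setOf_eq] at hx ⊢
      rw [hr]
      exact fun h => hx h
    · -- (f-1)
      intro x y t ht hx hy htx
      simp only [Set.mem_setOf_eq] at hx hy htx ⊢
      rw [← key t ht x y hx hy]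
      exact htx
    · -- (f-2)
      intro x y u' w i hxy hxU hmem
      simp only [Set.mem_setOf_eq] at hxU hmem ⊢
      rw [eqo x y u' w i hxy hxU]
      exact hmem
    · -- (f-2), empty outer symbol
      intro x y hxy hxU hy
      simp only [Set.mem_setOf_eq] at hxU hy ⊢
      rw [exy x y hxy hxU]
      exact hy
    · -- (f-3)
      intro x y u' w i hxy hxU hmem
      simp only [Set.mem_setOf_eq] at hxU hmem ⊢
      rw [eqo x y u' w i hxy hxU]
      exact hmem
    · -- (f-3), empty outer symbol
      intro x y _ hxU _
      exact hxU
  · rintro ⟨hq, hl, hn, U, hHU, hRU, hRUc, hi, hf2, hf2e, hf3, hf3e⟩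
    obtain ⟨h₀, hh₀⟩ := hH
    rcases Nat.eq_zero_or_pos n with h0 | hpos
    · subst h0
      refine ⟨G, fun g _ => ⟨g ∈ H, fun _ => h₀⟩, h₀, ⟨?_, ?_⟩, ?_⟩
      · intro x y
        funext v
        apply Part.ext; intro b
        refine Iff.trans ?_ (NPlace.mem_comp _ _ _ _).symm
        simp only [Part.mem_mk_iff]
        have hxy : M.o x y = x := by
          rw [show y = fun i => M.R i x from funext fun i => i.elim0, M.A2]
        rw [hxy]
        constructor
        · rintro ⟨hd, rfl⟩
          exact ⟨fun i => i.elim0, fun i => i.elim0, hd, rfl⟩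
        · rintro ⟨c, hcj, hd, rfl⟩
          exact ⟨hd, rfl⟩
      · exact fun i => i.elim0
      · ext g
        simp only [Set.mem_setOf_eq, Part.mem_mk_iff]
        exact ⟨fun hg => ⟨hg, by trivial⟩, fun ⟨hg, _⟩ => hg⟩
    · exact M.suff hh₀ ⟨0, hpos⟩ hq hl hn hHU hRU hRUc hi hf2e hf3
end

section
/- Let 𝒢_∧ = (G, o, ∧, R_1, …, R_n) be a functional Menger ∧-algebra of rank n and let H be a nonempty subset of G. Then H is a stabilizer of 𝒢_∧ if and only if: (1) H is a quasi-stable, ∧-stable and v-unitary subset of G; (2) there exists a subset U of G such that H ⊆ U, R_i U ⊆ H and R_i(G∖U) ⊆ G∖U for every i ∈ {1,…,n}; (3) for all x, y ∈ G: if x ∈ U and y ∈ H then y[R_1x…R_nx] ∈ H, and if x ∈ U and y ∈ U then y[R_1x…R_nx] ∈ U. -/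
universe u

/-- A functional Menger ∧-algebra of rank `n`. -/
structure MengerWAlgebra (n : ℕ) (G : Type u) extends MengerSystem n G where
  meet : G → G → G
  meet_comm : ∀ x y : G, meet x y = meet y x
  meet_assoc : ∀ x y z : G, meet (meet x y) z = meet x (meet y z)
  meet_idem : ∀ x : G, meet x x = x
  A8 : ∀ x y z : G,
    meet x (o y fun j => R j z) = o (meet x y) fun j => R j z
  A9 : ∀ x y : G, meet x y = o x fun j => R j (meet x y)
  A10 : ∀ (x y : G) (z : Fin n → G),
    o (meet x y) z = meet (o x z) (o y z)

/-- A representation of a functional Menger ∧-algebra by `n`-place functions. -/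
def MengerWAlgebra.IsRep {n : ℕ} {G : Type u} (M : MengerWAlgebra n G) {A : Type u}
    (P : G → NPlace n A) : Prop :=
  M.toMengerSystem.IsRep P ∧
  ∀ x y : G, P (M.meet x y) = NPlace.inter (P x) (P y)

/-- Stabilizers of a functional Menger ∧-algebra. -/
def MengerWAlgebra.IsStabilizer {n : ℕ} {G : Type u} (M : MengerWAlgebra n G)
    (H : Set G) : Prop :=
  ∃ (A : Type u) (P : G → NPlace n A) (a : A),
    M.IsRep P ∧ H = {g : G | a ∈ P g fun _ => a}

/-- ∧-stable subset. -/
def MengerWAlgebra.MeetStable {n : ℕ} {G : Type u} (M : MengerWAlgebra n G)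
    (H : Set G) : Prop :=
  ∀ x ∈ H, ∀ y ∈ H, M.meet x y ∈ H


section StabilizerAux

variable {n : ℕ} {G : Type u}

/-- `mrst M x y = x[R₁y…Rₙy]`, the "restriction of `x` to the domain of `y`". -/
def mrst (M : MengerWAlgebra n G) (x y : G) : G := M.o x fun j => M.R j y

variable (M : MengerWAlgebra n G)

lemma mrst_self (x : G) : mrst M x x = x := M.A2 x

lemma R_mrst (i : Fin n) (x y : G) : M.R i (mrst M x y) = mrst M (M.R i x) y :=
  M.A4 i x y

lemma mrst_comm (x y z : G) :
    mrst M (mrst M x y) z = mrst M (mrst M x z) y := M.A5 x y z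

lemma o_mrst (x : G) (y : Fin n → G) (z : G) :
    M.o x (fun i => mrst M (y i) z) = mrst M (M.o x y) z := (M.A1 x y _).symm

lemma mrst_mrst_self (x y : G) : mrst M (mrst M x y) y = mrst M x y := by
  show M.o (M.o x _) _ = _
  rw [M.A1]
  show M.o x (fun i => mrst M (M.R i y) y) = _
  congr 1
  funext i
  rw [mrst, ← M.A4, M.A2]


/-- All the hypotheses of the "if" direction, bundled. -/
structure Good (M : MengerWAlgebra n G) (H U : Set G) : Prop where
  hQ : M.toMengerSystem.QuasiStable H
  hM : M.MeetStable H
  hV : M.toMengerSystem.VUnitary H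
  hHU : H ⊆ U
  hRU : ∀ (i : Fin n) (x : G), x ∈ U → M.R i x ∈ H
  hRUc : ∀ (i : Fin n) (x : G), x ∉ U → M.R i x ∉ U
  h3a : ∀ x ∈ U, ∀ y ∈ H, mrst M y x ∈ H
  h3b : ∀ x ∈ U, ∀ y ∈ U, mrst M y x ∈ U

variable {M} {H U : Set G}

lemma Good.mem_U_of_R (hg : Good M H U) {i : Fin n} {x : G}
    (h : M.R i x ∈ U) : x ∈ U := by
  by_contra hx
  exact hg.hRUc i x hx h

lemma Good.mem_U_iff (hg : Good M H U) (i : Fin n) {x : G} :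
    x ∈ U ↔ M.R i x ∈ H :=
  ⟨fun h => hg.hRU i x h, fun h => hg.mem_U_of_R (hg.hHU h)⟩

lemma Good.unrst (hg : Good M H U) {s y : G} (hs : s ∈ U)
    (h : mrst M y s ∈ U) (i0 : Fin n) : y ∈ U := by
  have h1 : mrst M (M.R i0 y) s ∈ H := by
    rw [← R_mrst]
    exact hg.hRU i0 _ h
  have h2 : M.R i0 y ∈ H := hg.hV _ _ h1 (fun j => hg.hRU j s hs)
  exact hg.mem_U_of_R (hg.hHU h2)

lemma Good.comp_mem_U (hg : Good M H U) {x : G} {y : Fin n → G}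
    (h : M.o x y ∈ U) (i : Fin n) : y i ∈ U := by
  have hu : mrst M (y i) (M.o x y) ∈ U := by
    have e1 : mrst M (y i) (M.o x y) = M.o (M.R i x) y := (M.A7 i x y).symm
    rw [hg.mem_U_iff i, e1, ← M.A6 i i x y]
    exact hg.hRU i _ h
  exact hg.unrst h hu i

lemma Good.meet_mem_U_left (hg : Good M H U) {x y : G}
    (h : M.meet x y ∈ U) (i0 : Fin n) : x ∈ U := by
  have e : M.meet x y = mrst M x (M.meet x y) := M.A9 x y
  exact hg.unrst h (by rw [← e]; exact h) i0

lemma Good.meet_mem_U_right (hg : Good M H U) {x y : G}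
    (h : M.meet x y ∈ U) (i0 : Fin n) : y ∈ U :=
  hg.meet_mem_U_left (by rw [M.meet_comm]; exact h) i0

lemma Good.mrst_equiv (hg : Good M H U) {y s : G} (hy : y ∈ U) (hs : s ∈ U) :
    M.meet y (mrst M y s) ∈ U := by
  have e : M.meet y (mrst M y s) = mrst M (M.meet y y) s := M.A8 y y s
  rw [e, M.meet_idem]
  exact hg.h3b s hs y hy

lemma Good.equiv_trans (hg : Good M H U) {p q r : G}
    (hpq : M.meet p q ∈ U) (hqr : M.meet q r ∈ U) (i0 : Fin n) :
    M.meet p r ∈ U := by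
  letI : Min G := ⟨M.meet⟩
  letI : SemilatticeInf G := SemilatticeInf.mk' M.meet_comm M.meet_assoc M.meet_idem
  have hs' : M.meet p q = mrst M q (M.meet p q) := by
    conv_lhs => rw [M.meet_comm, M.A9 q p, M.meet_comm q p]
    rfl
  have ht' : M.meet q r = mrst M q (M.meet q r) := M.A9 q r
  have hst : M.meet (M.meet p q) (M.meet q r) = mrst M (M.meet p q) (M.meet q r) := by
    conv_lhs => rw [ht']
    simp only [mrst]
    rw [M.A8]
    have : M.meet (M.meet p q) q = M.meet p q := by
      rw [M.meet_assoc, M.meet_idem]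
    rw [this]
  have hmem : M.meet (M.meet p q) (M.meet q r) ∈ U := by
    rw [hst]
    exact hg.h3b _ hqr _ hpq
  have hle : M.meet (M.meet p q) (M.meet q r) ≤ M.meet p r :=
    le_inf (le_trans inf_le_left inf_le_left) (le_trans inf_le_right inf_le_right)
  have key : M.meet (M.meet p r) (M.meet (M.meet p q) (M.meet q r))
      = M.meet (M.meet p q) (M.meet q r) := inf_eq_right.mpr hle
  exact hg.meet_mem_U_left (by rw [key]; exact hmem) i0

lemma Good.upward (hg : Good M H U) {h g : G} (hh : h ∈ H)
    (hrg : mrst M g h ∈ H) : g ∈ H :=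
  hg.hV g _ hrg (fun j => hg.hRU j h (hg.hHU hh))

lemma Good.stable (hg : Good M H U) (hn : 0 < n) {x : G} {y : Fin n → G}
    (hx : x ∈ H) (hy : ∀ i, y i ∈ H) : M.o x y ∈ H := by
  letI : Min G := ⟨M.meet⟩
  letI : SemilatticeInf G := SemilatticeInf.mk' M.meet_comm M.meet_assoc M.meet_idem
  have huniv : (Finset.univ : Finset (Fin n)).Nonempty := ⟨⟨0, hn⟩, Finset.mem_univ _⟩
  set z := Finset.univ.inf' huniv y with hz
  have hzH : z ∈ H := by
    apply Finset.inf'_mem (s := H) (fun a ha b hb => hg.hM a ha b hb)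
    intro i _
    exact hy i
  set m := M.meet x z with hm
  have hmH : m ∈ H := hg.hM x hx z hzH
  have hm_le_x : m = mrst M x m := M.A9 x z
  have hm_le_y : ∀ i, mrst M (y i) m = m := by
    intro i
    have hle : m ≤ y i := le_trans inf_le_right (Finset.inf'_le _ (Finset.mem_univ i))
    have h1 : M.meet (y i) m = m := inf_eq_right.mpr hle
    have h2 : M.meet (y i) m = mrst M (y i) (M.meet (y i) m) := M.A9 (y i) m
    rw [h1] at h2
    exact h2.symm
  have e1 : mrst M (M.o x y) m = M.o x (fun _ => m) := by
    rw [← o_mrst]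
    congr 1
    funext i
    exact hm_le_y i
  have e2 : M.o m (fun _ => m) = mrst M (M.o x (fun _ => m)) (M.o m (fun _ => m)) := by
    calc M.o m (fun _ => m) = M.o (mrst M x m) (fun _ => m) := by rw [← hm_le_x]
      _ = M.o x (fun i => M.o (M.R i m) (fun _ => m)) := M.A1 x _ _
      _ = M.o x (fun _ => mrst M m (M.o m (fun _ => m))) := by
          congr 1
          funext i
          exact M.A7 i m (fun _ => m)
      _ = mrst M (M.o x (fun _ => m)) (M.o m (fun _ => m)) :=
          o_mrst M x (fun _ => m) _
  have h1 : M.o m (fun _ => m) ∈ H := hg.hQ m hmH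
  have h2 : M.o x (fun _ => m) ∈ H := hg.upward h1 (by rw [← e2]; exact h1)
  have h3 : mrst M (M.o x y) m ∈ H := by rw [e1]; exact h2
  exact hg.upward hmH h3


/-- "p and q are equal at the distinguished point": same membership in `U`,
and if both defined there, equal values. -/
def EqU (M : MengerWAlgebra n G) (U : Set G) (p q : G) : Prop :=
  (p ∈ U ↔ q ∈ U) ∧ (p ∈ U → M.meet p q ∈ U)

lemma Good.eqU_refl (hg : Good M H U) (p : G) : EqU M U p p :=
  ⟨Iff.rfl, fun h => by rw [M.meet_idem]; exact h⟩

lemma Good.eqU_symm (hg : Good M H U) {p q : G} (h : EqU M U p q) : EqU M U q p :=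
  ⟨h.1.symm, fun hq => by rw [M.meet_comm]; exact h.2 (h.1.mpr hq)⟩

lemma Good.eqU_trans (hg : Good M H U) (i0 : Fin n) {p q r : G}
    (h1 : EqU M U p q) (h2 : EqU M U q r) : EqU M U p r :=
  ⟨h1.1.trans h2.1, fun hp => hg.equiv_trans (h1.2 hp) (h2.2 (h1.1.mp hp)) i0⟩

lemma Good.eqU_mrst (hg : Good M H U) (i0 : Fin n) {y s : G}
    (hy : y ∈ U) (hs : s ∈ U) : EqU M U y (mrst M y s) :=
  ⟨⟨fun h => hg.h3b s hs y h, fun h => hg.unrst hs h i0⟩,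
    fun _ => hg.mrst_equiv hy hs⟩

lemma Good.eqU_update (hg : Good M H U) (i0 : Fin n) {f : G} {w : Fin n → G}
    {i : Fin n} {m : G} (hw : ∀ j, w j ∈ U) (hm : m ∈ U)
    (hle : mrst M (w i) m = m) :
    EqU M U (M.o f w) (M.o f (Function.update w i m)) := by
  have key : mrst M (M.o f w) m = mrst M (M.o f (Function.update w i m)) m := by
    rw [← o_mrst, ← o_mrst]
    congr 1
    funext j
    by_cases hj : j = i
    · subst hj
      rw [Function.update_self, hle, mrst_self]
    · rw [Function.update_of_ne hj]
  have e1 : EqU M U (M.o f w) (mrst M (M.o f w) m) :=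
    ⟨⟨fun h => hg.h3b m hm _ h, fun h => hg.unrst hm h i0⟩,
      fun h => hg.mrst_equiv h hm⟩
  have e2 : EqU M U (M.o f (Function.update w i m))
      (mrst M (M.o f (Function.update w i m)) m) :=
    ⟨⟨fun h => hg.h3b m hm _ h, fun h => hg.unrst hm h i0⟩,
      fun h => hg.mrst_equiv h hm⟩
  refine hg.eqU_trans i0 e1 ?_
  rw [key]
  exact hg.eqU_symm e2

lemma Good.eqU_to_inf (hg : Good M H U) (i0 : Fin n) {f : G} {w m : Fin n → G}
    (hw : ∀ j, w j ∈ U) (hm : ∀ j, m j ∈ U)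
    (hle : ∀ j, mrst M (w j) (m j) = m j) :
    EqU M U (M.o f w) (M.o f m) := by
  have main : ∀ S : Finset (Fin n),
      EqU M U (M.o f w) (M.o f (fun j => if j ∈ S then m j else w j)) := by
    intro S
    induction S using Finset.induction_on with
    | empty =>
        have : (fun j => if j ∈ (∅ : Finset (Fin n)) then m j else w j) = w := by
          funext j; simp
        rw [this]
        exact hg.eqU_refl _
    | @insert a S ha ih =>
        have ht : (fun j => if j ∈ insert a S then m j else w j)
            = Function.update (fun j => if j ∈ S then m j else w j) a (m a) := by
          funext j
          by_cases hj : j = a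
          · subst hj; simp
          · simp [Function.update_of_ne hj, Finset.mem_insert, hj]
        rw [ht]
        refine hg.eqU_trans i0 ih (hg.eqU_update i0 ?_ (hm a) ?_)
        · intro j
          by_cases hjS : j ∈ S
          · simp only [hjS, if_true]; exact hm j
          · simp only [hjS, if_false]; exact hw j
        · rw [if_neg ha]
          exact hle a
  have := main Finset.univ
  have et : (fun j => if j ∈ (Finset.univ : Finset (Fin n)) then m j else w j) = m := by
    funext j; simp
  rwa [et] at this

lemma Good.eqU_o (hg : Good M H U) (i0 : Fin n) {f : G} {w v : Fin n → G}
    (hw : ∀ j, w j ∈ U) (hv : ∀ j, v j ∈ U)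
    (hwv : ∀ j, M.meet (w j) (v j) ∈ U) :
    EqU M U (M.o f w) (M.o f v) := by
  set m : Fin n → G := fun j => M.meet (w j) (v j) with hmdef
  have hm : ∀ j, m j ∈ U := hwv
  have hlew : ∀ j, mrst M (w j) (m j) = m j := fun j => (M.A9 (w j) (v j)).symm
  have hlev : ∀ j, mrst M (v j) (m j) = m j := by
    intro j
    have h2 : m j = M.meet (v j) (w j) := M.meet_comm (w j) (v j)
    calc mrst M (v j) (m j) = mrst M (v j) (M.meet (v j) (w j)) := by rw [h2]
      _ = M.meet (v j) (w j) := (M.A9 (v j) (w j)).symm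
      _ = m j := h2.symm
  exact hg.eqU_trans i0 (hg.eqU_to_inf i0 hw hm hlew)
    (hg.eqU_symm (hg.eqU_to_inf i0 hv hm hlev))

lemma Good.mem_H_iff (hg : Good M H U) (i0 : Fin n) {e : G} (he : e ∈ H) (g : G) :
    g ∈ H ↔ (M.o g (fun _ => e) ∈ U ∧ M.meet (M.o g (fun _ => e)) e ∈ U) := by
  constructor
  · intro hgH
    have hp : M.o g (fun _ => e) ∈ H := hg.stable i0.pos hgH (fun _ => he)
    exact ⟨hg.hHU hp, hg.hHU (hg.hM _ hp _ he)⟩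
  · rintro ⟨hp, hq⟩
    set p := M.o g (fun _ => e) with hpdef
    have hq_eq : M.meet p e = mrst M e (M.meet p e) := by
      conv_lhs => rw [M.meet_comm, M.A9 e p, M.meet_comm e p]
      rfl
    have hqH : M.meet p e ∈ H := by
      rw [hq_eq]
      exact hg.h3a _ hq e he
    have hqp : mrst M p (M.meet p e) = M.meet p e := (M.A9 p e).symm
    have hpH : p ∈ H := hg.upward hqH (by rw [hqp]; exact hqH)
    exact hg.hV g _ hpH (fun _ => he)


lemma mem_comp_iff {A : Type u} {f : NPlace n A} {g : Fin n → NPlace n A}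
    {c : Fin n → A} {b : A} :
    b ∈ NPlace.comp f g c ↔
      ∃ h : ∀ i, (g i c).Dom, b ∈ f (fun i => (g i c).get (h i)) := by
  show b ∈ Part.bind _ _ ↔ _
  refine Part.mem_bind_iff.trans ?_
  constructor
  · rintro ⟨t, ⟨ht, hteq⟩, hb⟩
    subst hteq
    exact ⟨ht, hb⟩
  · rintro ⟨h, hb⟩
    exact ⟨_, ⟨h, rfl⟩, hb⟩

lemma isStabilizer_good {M : MengerWAlgebra n G} {H : Set G}
    (hst : M.IsStabilizer H) : ∃ U : Set G, Good M H U := by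
  obtain ⟨A, P, a, ⟨⟨hco, hri⟩, hmeet⟩, hHeq⟩ := hst
  have hmem : ∀ g : G, g ∈ H ↔ a ∈ P g (fun _ => a) := fun g => by rw [hHeq]; rfl
  refine ⟨{g : G | (P g (fun _ => a)).Dom}, ?_⟩
  have haux : ∀ (i : Fin n) (x : G), (P x (fun _ => a)).Dom →
      a ∈ P (M.R i x) (fun _ => a) := by
    intro i x hx
    rw [hri]
    exact Part.mem_map _ (Part.get_mem hx)
  constructor
  · -- hQ
    intro x hx
    rw [hmem] at hx ⊢
    rw [hco]
    refine mem_comp_iff.mpr ?_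
    obtain ⟨hd, hv⟩ := hx
    refine ⟨fun _ => hd, ?_⟩
    have et : (fun _ : Fin n => (P x (fun _ => a)).get hd) = fun _ => a :=
      funext fun _ => hv
    rw [et]
    exact ⟨hd, hv⟩
  · -- hM
    intro x hx y hy
    rw [hmem] at hx hy ⊢
    rw [hmeet]
    have e1 : P x (fun _ => a) = Part.some a := Part.eq_some_iff.mpr hx
    have e2 : P y (fun _ => a) = Part.some a := Part.eq_some_iff.mpr hy
    have h1 : (P x (fun _ => a)).Dom := by rw [e1]; trivial
    exact ⟨⟨h1, e1.trans e2.symm⟩, Part.get_eq_of_mem hx _⟩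
  · -- hV
    intro x y hxy hys
    simp only [hmem] at hxy hys ⊢
    rw [hco] at hxy
    obtain ⟨h, hb⟩ := mem_comp_iff.mp hxy
    have et : (fun i => (P (y i) (fun _ => a)).get (h i)) = fun _ => a :=
      funext fun i => Part.get_eq_of_mem (hys i) _
    rwa [et] at hb
  · -- hHU
    intro g hg
    exact Part.dom_iff_mem.mpr ⟨a, (hmem g).mp hg⟩
  · -- hRU
    intro i x hx
    exact (hmem _).mpr (haux i x hx)
  · -- hRUc
    intro i x hx hd
    apply hx
    have hd' : (P (M.R i x) (fun _ => a)).Dom := hd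
    rw [hri i x] at hd'
    exact hd'
  · -- h3a
    intro x hx y hy
    refine (hmem _).mpr ?_
    show a ∈ P (M.o y fun j => M.R j x) fun _ => a
    rw [hco]
    have hdom : ∀ i : Fin n, (P (M.R i x) (fun _ => a)).Dom := fun i => by
      rw [hri]; exact hx
    refine mem_comp_iff.mpr ⟨hdom, ?_⟩
    have et : (fun i => (P (M.R i x) (fun _ => a)).get (hdom i)) = fun _ : Fin n => a :=
      funext fun i => Part.get_eq_of_mem (haux i x hx) _
    rw [et]
    exact (hmem y).mp hy
  · -- h3b
    intro x hx y hy
    show (P (M.o y fun j => M.R j x) (fun _ => a)).Dom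
    obtain ⟨b, hb⟩ := Part.dom_iff_mem.mp hy
    refine Part.dom_iff_mem.mpr ⟨b, ?_⟩
    rw [hco]
    have hdom : ∀ i : Fin n, (P (M.R i x) (fun _ => a)).Dom := fun i => by
      rw [hri]; exact hx
    refine mem_comp_iff.mpr ⟨hdom, ?_⟩
    have et : (fun i => (P (M.R i x) (fun _ => a)).get (hdom i)) = fun _ : Fin n => a :=
      funext fun i => Part.get_eq_of_mem (haux i x hx) _
    rw [et]
    exact hb


lemma Good.isStabilizer (hg : Good M H U) (hn : 0 < n) {e : G} (he : e ∈ H) :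
    M.IsStabilizer H := by
  have i0 : Fin n := ⟨0, hn⟩
  letI s : Setoid {x : G // x ∈ U} :=
    ⟨fun p q => M.meet p.1 q.1 ∈ U,
     ⟨fun p => by rw [M.meet_idem]; exact p.2,
      fun {p q} h => by rw [M.meet_comm]; exact h,
      fun {p q r} h1 h2 => hg.equiv_trans h1 h2 i0⟩⟩
  let P : G → NPlace n (Quotient s) := fun g c =>
    ⟨M.o g (fun i => ((c i).out).1) ∈ U, fun h => ⟦⟨_, h⟩⟧⟩
  have memP : ∀ (g : G) (c : Fin n → Quotient s) (b : Quotient s),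
      b ∈ P g c ↔ ∃ hd : M.o g (fun i => ((c i).out).1) ∈ U,
        (⟦(⟨M.o g (fun i => ((c i).out).1), hd⟩ : {x : G // x ∈ U})⟧ : Quotient s) = b :=
    fun _ _ _ => Iff.rfl
  have hrepU : ∀ (c : Fin n → Quotient s) (i : Fin n), ((c i).out).1 ∈ U :=
    fun c i => ((c i).out).2
  have hout : ∀ p : {x : G // x ∈ U},
      M.meet (((⟦p⟧ : Quotient s)).out).1 p.1 ∈ U := fun p => Quotient.mk_out p
  refine ⟨Quotient s, P, ⟦⟨e, hg.hHU he⟩⟧, ⟨⟨?_, ?_⟩, ?_⟩, ?_⟩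
  · -- composition
    intro x y
    funext c
    have hA1 : M.o (M.o x y) (fun i => ((c i).out).1)
        = M.o x (fun i => M.o (y i) (fun j => ((c j).out).1)) := M.A1 x y _
    have E : ∀ h : ∀ i, M.o (y i) (fun j => ((c j).out).1) ∈ U,
        EqU M U
          (M.o x (fun i =>
            (((⟦(⟨M.o (y i) (fun j => ((c j).out).1), h i⟩ : {x : G // x ∈ U})⟧ :
              Quotient s)).out).1))
          (M.o x (fun i => M.o (y i) (fun j => ((c j).out).1))) :=
      fun h => hg.eqU_o i0
        (fun j => (((⟦(⟨M.o (y j) (fun k => ((c k).out).1), h j⟩ : {x : G // x ∈ U})⟧ :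
          Quotient s)).out).2)
        h (fun j => hout _)
    apply Part.ext
    intro b
    rw [memP]
    constructor
    · rintro ⟨hd, hb⟩
      have hL : M.o x (fun i => M.o (y i) (fun j => ((c j).out).1)) ∈ U := by
        rw [← hA1]; exact hd
      have hv : ∀ i, M.o (y i) (fun j => ((c j).out).1) ∈ U :=
        fun i => hg.comp_mem_U hL i
      refine mem_comp_iff.mpr ⟨hv, ?_⟩
      rw [memP]
      refine ⟨(E hv).1.mpr hL, ?_⟩
      refine Eq.trans (Quotient.sound ?_) hb
      show M.meet _ (M.o (M.o x y) (fun i => ((c i).out).1)) ∈ U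
      rw [hA1, M.meet_comm]
      have := (E hv).2 ((E hv).1.mpr hL)
      rw [M.meet_comm] at this
      exact this
    · intro hbr
      obtain ⟨hv, hbm⟩ := mem_comp_iff.mp hbr
      rw [memP] at hbm
      obtain ⟨hd2, hb⟩ := hbm
      have hL : M.o x (fun i => M.o (y i) (fun j => ((c j).out).1) ) ∈ U :=
        (E hv).1.mp hd2
      refine ⟨by rw [hA1]; exact hL, ?_⟩
      refine Eq.trans (Quotient.sound ?_) hb
      show M.meet (M.o (M.o x y) (fun i => ((c i).out).1)) _ ∈ U
      rw [hA1]
      have := (E hv).2 hd2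
      rw [M.meet_comm] at this
      exact this
  · -- the R operations
    intro i x
    funext c
    have hA7 : M.o (M.R i x) (fun j => ((c j).out).1)
        = M.o (((c i).out).1) (fun j => M.R j (M.o x (fun k => ((c k).out).1))) :=
      M.A7 i x _
    apply Part.ext
    intro b
    rw [memP]
    have hdiff : M.o (M.R i x) (fun j => ((c j).out).1) ∈ U ↔
        M.o x (fun j => ((c j).out).1) ∈ U := by
      constructor
      · intro hd
        refine (hg.mem_U_iff i0).mpr ?_
        rw [M.A6 i0 i x]
        exact hg.hRU i0 _ hd
      · intro hd
        rw [hA7]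
        exact hg.h3b _ hd _ (hrepU c i)
    constructor
    · rintro ⟨hd, hb⟩
      have hd' : M.o x (fun j => ((c j).out).1) ∈ U := hdiff.mp hd
      refine (Part.mem_map_iff _).mpr ⟨(P x c).get hd', Part.get_mem hd', ?_⟩
      show c i = b
      refine Eq.trans ?_ hb
      conv_lhs => rw [← Quotient.out_eq (c i)]
      refine Quotient.sound ?_
      show M.meet (((c i).out)).1 (M.o (M.R i x) (fun j => ((c j).out).1)) ∈ U
      rw [hA7]
      exact hg.mrst_equiv (hrepU c i) hd'
    · intro hbr
      obtain ⟨aa, haa, hab⟩ := (Part.mem_map_iff _).mp hbr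
      rw [memP] at haa
      obtain ⟨hd', -⟩ := haa
      have hd : M.o (M.R i x) (fun j => ((c j).out).1) ∈ U := hdiff.mpr hd'
      refine ⟨hd, ?_⟩
      refine Eq.trans ?_ hab
      show _ = c i
      conv_rhs => rw [← Quotient.out_eq (c i)]
      refine Quotient.sound ?_
      show M.meet (M.o (M.R i x) (fun j => ((c j).out).1)) (((c i).out)).1 ∈ U
      rw [M.meet_comm, hA7]
      exact hg.mrst_equiv (hrepU c i) hd'
  · -- meet
    intro x y
    funext c
    have hA10 : M.o (M.meet x y) (fun j => ((c j).out).1)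
        = M.meet (M.o x (fun j => ((c j).out).1)) (M.o y (fun j => ((c j).out).1)) :=
      M.A10 x y _
    apply Part.ext
    intro b
    rw [memP]
    constructor
    · rintro ⟨hd, hb⟩
      rw [hA10] at hd
      have hp := hg.meet_mem_U_left hd i0
      have hq := hg.meet_mem_U_right hd i0
      have Peq : P x c = P y c := by
        refine Part.ext' (iff_of_true hp hq) ?_
        intro h1 h2
        exact Quotient.sound hd
      refine ⟨⟨hp, Peq⟩, ?_⟩
      show (⟦(⟨M.o x (fun j => ((c j).out).1), hp⟩ : {x : G // x ∈ U})⟧ : Quotient s) = b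
      refine Eq.trans (Quotient.sound ?_) hb
      show M.meet (M.o x (fun j => ((c j).out).1))
        (M.o (M.meet x y) (fun j => ((c j).out).1)) ∈ U
      rw [hA10, ← M.meet_assoc, M.meet_idem]
      exact hd
    · rintro ⟨⟨hp, Peq⟩, hb⟩
      have hmem : (P x c).get hp ∈ P y c := by
        rw [← Peq]
        exact Part.get_mem hp
      rw [memP] at hmem
      obtain ⟨hq, hqe⟩ := hmem
      have hpq : M.meet (M.o x (fun j => ((c j).out).1))
          (M.o y (fun j => ((c j).out).1)) ∈ U := by
        rw [M.meet_comm]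
        exact Quotient.exact hqe
      refine ⟨by rw [hA10]; exact hpq, ?_⟩
      refine Eq.trans (Quotient.sound ?_) hb
      show M.meet (M.o (M.meet x y) (fun j => ((c j).out).1))
        (M.o x (fun j => ((c j).out).1)) ∈ U
      rw [hA10, M.meet_comm (M.meet _ _), ← M.meet_assoc, M.meet_idem]
      exact hpq
  · -- the stabilized set is H
    apply Set.ext
    intro g
    have E : EqU M U
        (M.o g (fun _ => (((⟦(⟨e, hg.hHU he⟩ : {x : G // x ∈ U})⟧ : Quotient s)).out).1))
        (M.o g (fun _ => e)) :=
      hg.eqU_o i0 (fun _ => ((⟦(⟨e, hg.hHU he⟩ : {x : G // x ∈ U})⟧ : Quotient s)).out.2)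
        (fun _ => hg.hHU he) (fun _ => hout _)
    constructor
    · intro hgH
      obtain ⟨hpU, hpe⟩ := (hg.mem_H_iff i0 he g).mp hgH
      show _ ∈ P g _
      rw [memP]
      have hd : M.o g (fun _ =>
          (((⟦(⟨e, hg.hHU he⟩ : {x : G // x ∈ U})⟧ : Quotient s)).out).1) ∈ U :=
        E.1.mpr hpU
      refine ⟨hd, Quotient.sound ?_⟩
      show M.meet (M.o g _) e ∈ U
      exact hg.equiv_trans (E.2 hd) hpe i0
    · intro hbr
      have hbr' : _ ∈ P g _ := hbr
      rw [memP] at hbr'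
      obtain ⟨hd, hb⟩ := hbr'
      have hrel : M.meet (M.o g (fun _ =>
          (((⟦(⟨e, hg.hHU he⟩ : {x : G // x ∈ U})⟧ : Quotient s)).out).1)) e ∈ U :=
        Quotient.exact hb
      have hpU : M.o g (fun _ => e) ∈ U := E.1.mp hd
      have h1 : M.meet (M.o g (fun _ => e)) (M.o g (fun _ =>
          (((⟦(⟨e, hg.hHU he⟩ : {x : G // x ∈ U})⟧ : Quotient s)).out).1)) ∈ U := by
        rw [M.meet_comm]
        exact E.2 hd
      exact (hg.mem_H_iff i0 he g).mpr ⟨hpU, hg.equiv_trans h1 hrel i0⟩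

end StabilizerAux

/-- **Theorem 4.** A nonempty `H ⊆ G` is a stabilizer of a functional Menger
∧-algebra of rank `n` iff (1) it is quasi-stable, ∧-stable and v-unitary;
(2) there is `U ⊆ G` with `H ⊆ U`, `Rᵢ U ⊆ H`, `Rᵢ (G∖U) ⊆ G∖U`;
(3) `x ∈ U ∧ y ∈ H → y[R₁x…Rₙx] ∈ H` and `x ∈ U ∧ y ∈ U → y[R₁x…Rₙx] ∈ U`. -/
theorem wAlgebra_stabilizer_iff {n : ℕ} {G : Type u} (M : MengerWAlgebra n G)
    (H : Set G) (hH : H.Nonempty) :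
    M.IsStabilizer H ↔
      ((M.toMengerSystem.QuasiStable H ∧ M.MeetStable H ∧
          M.toMengerSystem.VUnitary H) ∧
        ∃ U : Set G, (H ⊆ U ∧
          (∀ i : Fin n, ∀ x ∈ U, M.R i x ∈ H) ∧
          (∀ i : Fin n, ∀ x ∈ Uᶜ, M.R i x ∈ Uᶜ)) ∧
          (∀ x ∈ U, ∀ y ∈ H, M.o y (fun j => M.R j x) ∈ H) ∧
          (∀ x ∈ U, ∀ y ∈ U, M.o y (fun j => M.R j x) ∈ U)) := by
  constructor
  · intro hst
    obtain ⟨U, hg⟩ := isStabilizer_good hst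
    exact ⟨⟨hg.hQ, hg.hM, hg.hV⟩, U,
      ⟨hg.hHU, fun i x hx => hg.hRU i x hx, fun i x hx => hg.hRUc i x hx⟩,
      fun x hx y hy => hg.h3a x hx y hy, fun x hx y hy => hg.h3b x hx y hy⟩
  · rintro ⟨⟨hQ, hM, hV⟩, U, ⟨hHU, hRU, hRUc⟩, h3a, h3b⟩
    obtain ⟨e, he⟩ := hH
    rcases Nat.eq_zero_or_pos n with hn | hn
    · -- degenerate case `n = 0`: `G` is a subsingleton and `H = G`.
      subst hn
      have h0 : ∀ (z : G) (f : Fin 0 → G), M.o z f = z := by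
        intro z f
        have hf : f = fun i => M.R i z := funext fun i => i.elim0
        rw [hf, M.A2]
      have hsub : ∀ x y : G, x = y := by
        intro x y
        have hxy : M.meet x y = x := by rw [M.A9]; exact h0 x _
        have hyx : M.meet y x = y := by rw [M.A9]; exact h0 y _
        rw [← hxy, M.meet_comm, hyx]
      have hHuniv : H = Set.univ := Set.eq_univ_of_forall fun g => (hsub e g) ▸ he
      refine ⟨PUnit.{u+1}, fun g c => Part.some PUnit.unit, PUnit.unit,
        ⟨⟨?_, ?_⟩, ?_⟩, ?_⟩
      · intro x y
        funext c
        apply Part.ext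
        intro b
        constructor
        · intro hb
          exact mem_comp_iff.mpr ⟨fun i => trivial, hb⟩
        · intro hb
          obtain ⟨h, hb'⟩ := mem_comp_iff.mp hb
          exact hb'
      · intro i
        exact i.elim0
      · intro x y
        funext c
        apply Part.ext
        intro b
        cases b
        constructor
        · intro _
          exact ⟨⟨trivial, rfl⟩, rfl⟩
        · intro _
          exact Part.mem_some _
      · rw [hHuniv]
        exact Set.ext fun g => iff_of_true trivial (Part.mem_some _)
    · exact Good.isStabilizer
        ⟨hQ, hM, hV, hHU, fun i x hx => hRU i x hx, fun i x hx => hRUc i x hx,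
          h3a, h3b⟩ hn he
end

section
/- Let 𝒢_∧ = (G, o, ∧, R_1, …, R_n) be a functional Menger ∧-algebra of rank n and let H be a nonempty subset of G. Then H is a stabilizer of 𝒢_∧ if and only if H is a stable, ∧-stable and v-unitary subset of G such that R_i H ⊆ H for every i ∈ {1,…,n}. -/
universe u

namespace Stab5

variable {n : ℕ} {G : Type u}

section
variable (M : MengerWAlgebra n G) (H : Set G)

/-- `D = {g : ∀ i, Rᵢ g ∈ H}` : elements "defined at the base point". -/
def D : Set G := {g | ∀ i, M.R i g ∈ H}

/-- `x ε y` iff `x ∧ y ∈ D` : "defined at the base point with the same value". -/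
def eps (x y : G) : Prop := M.meet x y ∈ D M H

/-- the restriction order. -/
def lle (x y : G) : Prop := x = M.o y fun i => M.R i x

variable {M H}

lemma lle_refl (x : G) : lle M x x := (M.A2 x).symm

lemma restr_lle (f z : G) : lle M (M.o f fun i => M.R i z) f := by
  unfold lle
  have h : (fun i => M.R i (M.o f fun j => M.R j z))
      = fun i => M.o (M.R i f) (fun j => M.R j z) :=
    funext fun i => M.A4 i f z
  rw [h, ← M.A1, M.A2]

lemma lle_trans {u v w : G} (h1 : lle M u v) (h2 : lle M v w) : lle M u w := by
  unfold lle at *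
  have h3 : (fun i => M.R i u) = fun i => M.o (M.R i v) (fun j => M.R j u) := by
    funext i
    conv_lhs => rw [h1]
    exact M.A4 i v u
  calc u = M.o v (fun i => M.R i u) := h1
    _ = M.o (M.o w fun i => M.R i v) (fun i => M.R i u) := by rw [← h2]
    _ = M.o w (fun i => M.o (M.R i v) fun j => M.R j u) := M.A1 ..
    _ = M.o w (fun i => M.R i u) := by rw [← h3]

lemma meet_lle_left (x y : G) : lle M (M.meet x y) x := M.A9 x y

lemma meet_lle_right (x y : G) : lle M (M.meet x y) y := by
  unfold lle; rw [M.meet_comm]; exact M.A9 y x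

lemma lle_meet_eq {u w : G} (h : lle M u w) : M.meet u w = u := by
  rw [M.meet_comm]
  conv_lhs => rw [h]
  rw [M.A8, M.meet_idem, ← h]

lemma D_up (hv : M.toMengerSystem.VUnitary H) {g g₂ : G}
    (hg : g ∈ D M H) (h : lle M g g₂) : g₂ ∈ D M H := by
  intro i
  apply hv (M.R i g₂) (fun j => M.R j g) _ hg
  have he : M.o (M.R i g₂) (fun j => M.R j g) = M.R i g := by
    conv_rhs => rw [h]
    exact (M.A4 i g₂ g).symm
  rw [he]; exact hg i

lemma D_restr (hs : M.toMengerSystem.Stable H) {f z : G}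
    (hf : f ∈ D M H) (hz : z ∈ D M H) :
    M.o f (fun j => M.R j z) ∈ D M H := by
  intro i
  rw [M.A4]
  exact hs _ _ (hf i) hz

lemma eps_refl {g : G} (hg : g ∈ D M H) : eps M H g g := by
  unfold eps; rw [M.meet_idem]; exact hg

lemma eps_symm {g g' : G} (h : eps M H g g') : eps M H g' g := by
  unfold eps at *; rwa [M.meet_comm]

lemma lle_eps {u w : G} (hu : u ∈ D M H) (h : lle M u w) : eps M H u w := by
  unfold eps; rw [lle_meet_eq h]; exact hu

lemma meet_D (hs : M.toMengerSystem.Stable H) {u v w : G}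
    (hu : u ∈ D M H) (hv' : v ∈ D M H) (h1 : lle M u w) (h2 : lle M v w) :
    M.meet u v ∈ D M H := by
  have key : M.meet u v = M.o u (fun j => M.R j v) := by
    conv_lhs => rw [h2]
    rw [M.A8, lle_meet_eq h1]
  rw [key]; exact D_restr hs hu hv'

lemma eps_trans (hs : M.toMengerSystem.Stable H) (hv : M.toMengerSystem.VUnitary H)
    {a b c : G} (h1 : eps M H a b) (h2 : eps M H b c) : eps M H a c := by
  have hu : lle M (M.meet a b) b := meet_lle_right a b
  have hvv : lle M (M.meet b c) b := meet_lle_left b c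
  have hD : M.meet (M.meet a b) (M.meet b c) ∈ D M H := meet_D hs h1 h2 hu hvv
  have hid : M.meet (M.meet a b) (M.meet b c) = M.meet (M.meet a c) b := by
    rw [M.meet_assoc, ← M.meet_assoc b b c, M.meet_idem, M.meet_comm b c, ← M.meet_assoc]
  rw [hid] at hD
  exact D_up hv hD (meet_lle_left _ _)

lemma H_sub_D (hr : ∀ i : Fin n, ∀ x ∈ H, M.R i x ∈ H) {h : G} (hh : h ∈ H) :
    h ∈ D M H := fun i => hr i h hh

lemma eps_H (hs : M.toMengerSystem.Stable H) (hm : M.MeetStable H)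
    (hv : M.toMengerSystem.VUnitary H) (hr : ∀ i : Fin n, ∀ x ∈ H, M.R i x ∈ H)
    {h g : G} (hh : h ∈ H) : eps M H h g ↔ g ∈ H := by
  constructor
  · intro he
    have h1 : M.meet h g ∈ H := by
      rw [M.A9]
      exact hs h _ hh (fun j => he j)
    have h2 : M.meet g h ∈ H := by rwa [M.meet_comm]
    apply hv g (fun j => M.R j (M.meet g h)) _ (fun j => hr j _ h2)
    rw [← M.A9]; exact h2
  · intro hg' i
    exact hr i _ (hm h hh g hg')

/-- the mixed tuple used in the induction: first `k` coordinates from `z`, rest `y`. -/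
def mix (z y : Fin n → G) (k : ℕ) : Fin n → G := fun i => if i.val < k then z i else y i

lemma restr_chain (hs : M.toMengerSystem.Stable H) {z y : Fin n → G}
    (hzD : ∀ i, z i ∈ D M H) (hle : ∀ i, lle M (z i) (y i)) (g : G) :
    lle M (M.o g z) (M.o g y) ∧ (M.o g y ∈ D M H → M.o g z ∈ D M H) := by
  have key : ∀ k : ℕ, lle M (M.o g (mix z y k)) (M.o g y) ∧
      (M.o g y ∈ D M H → M.o g (mix z y k) ∈ D M H) := by
    intro k
    induction k with
    | zero =>
      have h0 : mix z y 0 = y := by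
        funext i; simp [mix]
      rw [h0]; exact ⟨lle_refl _, fun h => h⟩
    | succ k ih =>
      by_cases hk : k < n
      · set i0 : Fin n := ⟨k, hk⟩ with hi0
        have hmix : mix z y (k+1)
            = Function.update (mix z y k) i0 (M.o (y i0) (fun j => M.R j (z i0))) := by
          funext i
          rcases eq_or_ne i i0 with rfl | hi
          · simp only [Function.update_self]
            have : (i0 : Fin n).val < k + 1 := Nat.lt_succ_of_le (Nat.le_of_eq rfl)
            simp only [mix, this, if_pos]
            exact hle i0
          · rw [Function.update_of_ne hi]
            have hvk : i.val ≠ k := fun hc => hi (Fin.ext hc)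
            have : i.val < k + 1 ↔ i.val < k := by omega
            simp only [mix, this]
        have hmixk : Function.update (mix z y k) i0 (y i0) = mix z y k := by
          funext i
          rcases eq_or_ne i i0 with rfl | hi
          · simp only [Function.update_self, mix]
            rw [if_neg (by simp [hi0])]
          · rw [Function.update_of_ne hi]
        have hstep : M.o g (mix z y (k+1))
            = M.o (M.o g (mix z y k)) (fun j => M.R j (z i0)) := by
          rw [hmix, ← M.A3, hmixk]
        constructor
        · rw [hstep]
          exact lle_trans (restr_lle _ _) ih.1
        · intro hD
          rw [hstep]
          exact D_restr hs (ih.2 hD) (hzD i0)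
      · have : mix z y (k+1) = mix z y k := by
          funext i
          have h1 : i.val < k + 1 := by omega
          have h2 : i.val < k := by omega
          simp [mix, h1, h2]
        rw [this]; exact ih
  have hz : mix z y n = z := by
    funext i; simp [mix, i.isLt]
  have := key n
  rwa [hz] at this

lemma o_congr (hs : M.toMengerSystem.Stable H) (hv : M.toMengerSystem.VUnitary H)
    {y y' : Fin n → G} (hy : ∀ i, y i ∈ D M H) (hy' : ∀ i, y' i ∈ D M H)
    (he : ∀ i, eps M H (y i) (y' i)) (g : G) :
    (M.o g y ∈ D M H ↔ M.o g y' ∈ D M H) ∧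
      (M.o g y ∈ D M H → eps M H (M.o g y) (M.o g y')) := by
  set z : Fin n → G := fun i => M.meet (y i) (y' i) with hz
  have hzD : ∀ i, z i ∈ D M H := he
  have hle1 : ∀ i, lle M (z i) (y i) := fun i => meet_lle_left _ _
  have hle2 : ∀ i, lle M (z i) (y' i) := fun i => meet_lle_right _ _
  obtain ⟨l1, d1⟩ := restr_chain hs hzD hle1 g
  obtain ⟨l2, d2⟩ := restr_chain hs hzD hle2 g
  refine ⟨⟨fun h => D_up hv (d1 h) l2, fun h => D_up hv (d2 h) l1⟩, fun h => ?_⟩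
  have hzz : M.o g z ∈ D M H := d1 h
  exact eps_trans hs hv (eps_symm (lle_eps hzz l1)) (lle_eps hzz l2)

lemma D_coords (hv : M.toMengerSystem.VUnitary H) {x : G} {v : Fin n → G}
    (h : M.o x v ∈ D M H) (i : Fin n) : v i ∈ D M H := by
  intro j
  apply hv (M.R j (v i)) (fun l => M.R l (M.o x v)) _ (fun l => h l)
  have key : M.R j (M.o x v) = M.o (M.R j (v i)) (fun l => M.R l (M.o x v)) := by
    rw [M.A6 j i x v, M.A7 i x v, M.A4]
  rw [← key]; exact h j

variable (M H)

/-- the carrier of the quotient. -/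
def Omega : Type u := {g : G // g ∈ D M H}

def qSetoid (hs : M.toMengerSystem.Stable H) (hv : M.toMengerSystem.VUnitary H) :
    Setoid (Omega M H) where
  r a b := eps M H a.val b.val
  iseqv := ⟨fun a => eps_refl a.2, eps_symm, eps_trans hs hv⟩

def QA (hs : M.toMengerSystem.Stable H) (hv : M.toMengerSystem.VUnitary H) : Type u :=
  Quotient (qSetoid M H hs hv)

noncomputable def Pfun (hs : M.toMengerSystem.Stable H) (hv : M.toMengerSystem.VUnitary H)
    (g : G) : NPlace n (QA M H hs hv) := fun av =>
  ⟨M.o g (fun i => ((av i).out).val) ∈ D M H,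
   fun h => Quotient.mk (qSetoid M H hs hv) ⟨_, h⟩⟩

variable {M H}

lemma mem_Pfun {hs : M.toMengerSystem.Stable H} {hv : M.toMengerSystem.VUnitary H}
    {g : G} {av : Fin n → QA M H hs hv} {q : QA M H hs hv} :
    q ∈ Pfun M H hs hv g av ↔
      ∃ h : M.o g (fun i => ((av i).out).val) ∈ D M H,
        Quotient.mk (qSetoid M H hs hv) ⟨M.o g (fun i => ((av i).out).val), h⟩ = q :=
  Part.mem_mk_iff

lemma mkS_eq {hs : M.toMengerSystem.Stable H} {hv : M.toMengerSystem.VUnitary H}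
    {a b : Omega M H} (h : eps M H a.val b.val) :
    Quotient.mk (qSetoid M H hs hv) a = Quotient.mk (qSetoid M H hs hv) b :=
  Quot.sound h

lemma hom_o (hs : M.toMengerSystem.Stable H) (hv : M.toMengerSystem.VUnitary H)
    (x : G) (y : Fin n → G) :
    Pfun M H hs hv (M.o x y)
      = NPlace.comp (Pfun M H hs hv x) (fun i => Pfun M H hs hv (y i)) := by
  funext av
  apply Part.ext
  intro q
  set S := qSetoid M H hs hv with hS
  set w : Fin n → G := fun i => ((av i).out).val with hw
  set v : Fin n → G := fun i => M.o (y i) w with hvdef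
  have hA1 : M.o (M.o x y) w = M.o x v := M.A1 x y w
  constructor
  · rw [mem_Pfun]
    rintro ⟨hD, hq⟩
    have hD' : M.o x v ∈ D M H := hA1 ▸ hD
    have hq' : Quotient.mk S ⟨M.o x v, hD'⟩ = q := by
      rw [← hq]; exact congrArg (Quotient.mk S) (Subtype.ext hA1.symm)
    have hcoords : ∀ i, v i ∈ D M H := D_coords hv hD'
    simp only [NPlace.comp]
    refine Part.mem_bind_iff.mpr ?_
    refine ⟨fun i => Quotient.mk S ⟨v i, hcoords i⟩, ?_, ?_⟩
    · apply Part.mem_mk_iff.mpr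
      exact ⟨hcoords, rfl⟩
    · apply mem_Pfun.mpr
      set vt : Fin n → G :=
        fun i => (((Quotient.mk S ⟨v i, hcoords i⟩ : QA M H hs hv)).out).val with hvt
      have hvtD : ∀ i, vt i ∈ D M H :=
        fun i => ((Quotient.mk S ⟨v i, hcoords i⟩ : QA M H hs hv)).out.2
      have he : ∀ i, eps M H (v i) (vt i) := by
        intro i
        exact eps_symm (Quotient.mk_out (s := S) ⟨v i, hcoords i⟩)
      obtain ⟨hiff, heps⟩ := o_congr hs hv hcoords hvtD he x
      refine ⟨hiff.mp hD', ?_⟩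
      rw [← hq']
      exact mkS_eq (eps_symm (heps hD'))
  · simp only [NPlace.comp]
    intro hq0
    obtain ⟨b, hb, hq⟩ := Part.mem_bind_iff.mp hq0
    rw [Part.mem_mk_iff] at hb
    obtain ⟨hDt, hbval⟩ := hb
    rw [mem_Pfun] at hq
    obtain ⟨hDb, hqval⟩ := hq
    set vt : Fin n → G := fun i => ((b i).out).val with hvt
    have hDt' : ∀ i, v i ∈ D M H := hDt
    have hbi : ∀ i, b i = Quotient.mk S ⟨v i, hDt i⟩ := fun i => (congrFun hbval i).symm
    have he : ∀ i, eps M H (v i) (vt i) := by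
      intro i
      have h1 : (b i).out = ((Quotient.mk S ⟨v i, hDt i⟩ : QA M H hs hv)).out := by
        rw [hbi i]
      have := Quotient.mk_out (s := S) (⟨v i, hDt i⟩ : Omega M H)
      exact eps_symm (by rw [hvt]; simp only [h1]; exact this)
    have hvtD : ∀ i, vt i ∈ D M H := fun i => (b i).out.2
    obtain ⟨hiff, heps⟩ := o_congr hs hv hDt' hvtD he x
    have hD' : M.o x v ∈ D M H := hiff.mpr hDb
    have hD : M.o (M.o x y) w ∈ D M H := hA1 ▸ hD'
    rw [mem_Pfun]
    refine ⟨hD, ?_⟩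
    have e1 : Quotient.mk S ⟨M.o (M.o x y) w, hD⟩ = Quotient.mk S ⟨M.o x v, hD'⟩ :=
      congrArg (Quotient.mk S) (Subtype.ext hA1)
    have e2 : Quotient.mk S ⟨M.o x v, hD'⟩ = Quotient.mk S ⟨M.o x vt, hDb⟩ :=
      mkS_eq (heps hD')
    rw [e1, e2]
    exact hqval

lemma hom_R (hs : M.toMengerSystem.Stable H) (hv : M.toMengerSystem.VUnitary H)
    (i : Fin n) (x : G) :
    Pfun M H hs hv (M.R i x) = NPlace.Ri i (Pfun M H hs hv x) := by
  funext av
  apply Part.ext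
  intro q
  set S := qSetoid M H hs hv with hS
  set w : Fin n → G := fun i => ((av i).out).val with hw
  have hDiff : (M.o (M.R i x) w ∈ D M H) ↔ (M.o x w ∈ D M H) := by
    constructor
    · intro h j
      rw [show M.R j (M.o x w) = M.R j (M.o (M.R i x) w) from M.A6 j i x w]
      exact h j
    · intro h j
      rw [← show M.R j (M.o x w) = M.R j (M.o (M.R i x) w) from M.A6 j i x w]
      exact h j
  have hval : ∀ h : M.o (M.R i x) w ∈ D M H,
      Quotient.mk S ⟨M.o (M.R i x) w, h⟩ = av i := by
    intro h
    have hA7 : M.o (M.R i x) w = M.o (w i) (fun j => M.R j (M.o x w)) := M.A7 i x w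
    have hlle : lle M (M.o (M.R i x) w) (w i) := by
      rw [hA7]; exact restr_lle _ _
    have heps : eps M H (M.o (M.R i x) w) (w i) := lle_eps h hlle
    have e1 : Quotient.mk S ⟨M.o (M.R i x) w, h⟩ = Quotient.mk S ((av i).out) :=
      mkS_eq heps
    rw [e1]
    exact Quotient.out_eq (av i)
  constructor
  · rw [mem_Pfun]
    rintro ⟨hD, hq⟩
    simp only [NPlace.Ri]
    rw [Part.mem_map_iff]
    refine ⟨Quotient.mk S ⟨M.o x w, hDiff.mp hD⟩, ⟨hDiff.mp hD, rfl⟩, ?_⟩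
    rw [← hq]
    exact (hval hD).symm
  · simp only [NPlace.Ri]
    rw [Part.mem_map_iff]
    rintro ⟨u, hu, hq⟩
    obtain ⟨hDx, -⟩ := (mem_Pfun (hs := hs) (hv := hv)).mp hu
    rw [mem_Pfun]
    refine ⟨hDiff.mpr hDx, ?_⟩
    rw [hval (hDiff.mpr hDx)]
    exact hq

lemma hom_meet (hs : M.toMengerSystem.Stable H) (hv : M.toMengerSystem.VUnitary H)
    (x y : G) :
    Pfun M H hs hv (M.meet x y)
      = NPlace.inter (Pfun M H hs hv x) (Pfun M H hs hv y) := by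
  funext av
  apply Part.ext
  intro q
  set S := qSetoid M H hs hv with hS
  set w : Fin n → G := fun i => ((av i).out).val with hw
  have hA10 : M.o (M.meet x y) w = M.meet (M.o x w) (M.o y w) := M.A10 x y w
  set u : G := M.o x w with hu
  set u' : G := M.o y w with hu'
  constructor
  · rw [mem_Pfun]
    rintro ⟨hD, hq⟩
    have hDm : M.meet u u' ∈ D M H := hA10 ▸ hD
    have hDu : u ∈ D M H := D_up hv hDm (meet_lle_left u u')
    have hDu' : u' ∈ D M H := D_up hv hDm (meet_lle_right u u')
    have hPeq : Pfun M H hs hv x av = Pfun M H hs hv y av := by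
      apply Part.ext
      intro r
      rw [mem_Pfun, mem_Pfun]
      constructor
      · rintro ⟨h1, h2⟩
        exact ⟨hDu', by rw [← h2]; exact mkS_eq (eps_symm (show eps M H u u' from hDm))⟩
      · rintro ⟨h1, h2⟩
        exact ⟨hDu, by rw [← h2]; exact mkS_eq (show eps M H u u' from hDm)⟩
    simp only [NPlace.inter]
    rw [Part.mem_mk_iff]
    refine ⟨⟨hDu, hPeq⟩, ?_⟩
    rw [← hq]
    have : eps M H (M.meet u u') u := lle_eps hDm (meet_lle_left u u')
    have e1 : Quotient.mk S ⟨M.o (M.meet x y) w, hD⟩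
        = Quotient.mk S ⟨M.meet u u', hDm⟩ :=
      congrArg (Quotient.mk S) (Subtype.ext hA10)
    rw [e1]
    show Quotient.mk S ⟨u, hDu⟩ = Quotient.mk S ⟨M.meet u u', hDm⟩
    exact mkS_eq (eps_symm this)
  · simp only [NPlace.inter]
    rw [Part.mem_mk_iff]
    rintro ⟨⟨hDu, hPeq⟩, hq⟩
    have hDu : u ∈ D M H := hDu
    have hmem : (Quotient.mk S ⟨u, hDu⟩ : QA M H hs hv) ∈ Pfun M H hs hv y av := by
      rw [← hPeq]; apply mem_Pfun.mpr
      exact ⟨hDu, rfl⟩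
    replace hmem := mem_Pfun.mp hmem
    obtain ⟨hDu', hval⟩ := hmem
    have heps : eps M H u u' := by
      have := Quotient.exact (s := S) hval.symm
      exact this
    have hDm : M.meet u u' ∈ D M H := heps
    have hD : M.o (M.meet x y) w ∈ D M H := hA10 ▸ hDm
    rw [mem_Pfun]
    refine ⟨hD, ?_⟩
    have e1 : Quotient.mk S ⟨M.o (M.meet x y) w, hD⟩
        = Quotient.mk S ⟨M.meet u u', hDm⟩ :=
      congrArg (Quotient.mk S) (Subtype.ext hA10)
    have e2 : Quotient.mk S ⟨M.meet u u', hDm⟩ = Quotient.mk S ⟨u, hDu⟩ :=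
      mkS_eq (lle_eps hDm (meet_lle_left u u'))
    rw [e1, e2, ← hq]
    rfl

lemma backward (hs : M.toMengerSystem.Stable H) (hm : M.MeetStable H)
    (hv : M.toMengerSystem.VUnitary H) (hr : ∀ i : Fin n, ∀ x ∈ H, M.R i x ∈ H)
    (hne : H.Nonempty) : M.IsStabilizer H := by
  obtain ⟨h₀, hh₀⟩ := hne
  set S := qSetoid M H hs hv with hS
  refine ⟨QA M H hs hv, Pfun M H hs hv,
    Quotient.mk S ⟨h₀, H_sub_D hr hh₀⟩, ⟨⟨hom_o hs hv, hom_R hs hv⟩, hom_meet hs hv⟩, ?_⟩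
  set c : QA M H hs hv := Quotient.mk S ⟨h₀, H_sub_D hr hh₀⟩ with hc
  ext g
  have hstar : (c.out).val ∈ H := by
    have : eps M H h₀ (c.out).val := eps_symm (Quotient.mk_out (s := S) _)
    exact (eps_H hs hm hv hr hh₀).mp this
  constructor
  · intro hg
    have hmemH : M.o g (fun _ => (c.out).val) ∈ H :=
      hs g _ hg (fun _ => hstar)
    show c ∈ Pfun M H hs hv g fun _ => c
    rw [mem_Pfun]
    refine ⟨H_sub_D hr hmemH, ?_⟩
    exact mkS_eq (eps_symm ((eps_H hs hm hv hr hh₀).mpr hmemH))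
  · intro hg
    have hg' : c ∈ Pfun M H hs hv g fun _ => c := hg
    rw [mem_Pfun] at hg'
    obtain ⟨hD, hval⟩ := hg'
    have heps : eps M H (M.o g (fun _ => (c.out).val)) h₀ := by
      have := Quotient.exact (s := S) hval
      exact this
    have hmemH : M.o g (fun _ => (c.out).val) ∈ H :=
      (eps_H hs hm hv hr hh₀).mp (eps_symm heps)
    exact hv g (fun _ => (c.out).val) hmemH (fun _ => hstar)

end

end Stab5

/-- **Theorem 5.** A nonempty `H ⊆ G` is a stabilizer of a functional Menger
∧-algebra of rank `n` iff it is stable, ∧-stable and v-unitary with `Rᵢ H ⊆ H`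
for every `i`. -/
theorem wAlgebra_stabilizer_iff' {n : ℕ} {G : Type u} (M : MengerWAlgebra n G)
    (H : Set G) (hH : H.Nonempty) :
    M.IsStabilizer H ↔
      (M.toMengerSystem.Stable H ∧ M.MeetStable H ∧
        M.toMengerSystem.VUnitary H ∧
        ∀ i : Fin n, ∀ x ∈ H, M.R i x ∈ H) := by
  constructor
  · rintro ⟨A, P, a, ⟨⟨ho, hR⟩, hmeet⟩, hHeq⟩
    have hmem : ∀ g : G, g ∈ H ↔ a ∈ P g fun _ => a := by
      intro g; rw [hHeq]; rfl
    refine ⟨?_, ?_, ?_, ?_⟩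
    · -- Stable
      intro x y hx hy
      rw [hmem] at hx ⊢
      rw [ho]
      simp only [NPlace.comp]
      refine Part.mem_bind_iff.mpr ?_
      refine ⟨fun _ => a, ?_, hx⟩
      rw [Part.mem_mk_iff]
      refine ⟨fun i => ((hmem (y i)).mp (hy i)).fst, ?_⟩
      funext i
      exact Part.get_eq_of_mem ((hmem (y i)).mp (hy i)) _
    · -- MeetStable
      intro x hx y hy
      rw [hmem] at hx hy ⊢
      rw [hmeet]
      simp only [NPlace.inter]
      rw [Part.mem_mk_iff]
      have hxs : P x (fun _ => a) = Part.some a := Part.eq_some_iff.mpr hx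
      have hys : P y (fun _ => a) = Part.some a := Part.eq_some_iff.mpr hy
      refine ⟨⟨hx.fst, by rw [hxs, hys]⟩, ?_⟩
      exact Part.get_eq_of_mem hx _
    · -- VUnitary
      intro x y hxy hy
      rw [hmem] at hxy ⊢
      rw [ho] at hxy
      simp only [NPlace.comp] at hxy
      replace hxy := Part.mem_bind_iff.mp hxy
      obtain ⟨b, hb, hxb⟩ := hxy
      rw [Part.mem_mk_iff] at hb
      obtain ⟨hbD, hbval⟩ := hb
      have hba : b = fun _ => a := by
        rw [← hbval]
        funext i
        exact Part.get_eq_of_mem ((hmem (y i)).mp (hy i)) _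
      rwa [hba] at hxb
    · -- R stable
      intro i x hx
      rw [hmem] at hx ⊢
      rw [hR]
      simp only [NPlace.Ri]
      rw [Part.mem_map_iff]
      exact ⟨a, hx, rfl⟩
  · rintro ⟨hs, hm, hv, hr⟩
    exact Stab5.backward hs hm hv hr hH
end

section
/- Let Φ be a set of n-place functions on a set A that is closed under Menger composition and under each operation R_i, and let a ∈ A. Then the stabilizer H^a_Φ is a normal v-complex of (Φ, 𝒪, R_1, …, R_n): for all f, g ∈ Φ and every t ∈ T_n(Φ), if f, g ∈ H^a_Φ and t(f) ∈ H^a_Φ, then t(g) ∈ H^a_Φ. -/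
universe u

namespace NPlace

variable {n : ℕ} {A : Type u}

/-- The stabilizer `H^a_Φ = {f ∈ Φ : f(a,…,a) = a}`. -/
def stab (Φ : Set (NPlace n A)) (a : A) : Set (NPlace n A) :=
  {f | f ∈ Φ ∧ a ∈ f fun _ => a}

/-- `U^a_Φ = {f ∈ Φ : (a,…,a) ∈ dom f}`. -/
def ustab (Φ : Set (NPlace n A)) (a : A) : Set (NPlace n A) :=
  {f | f ∈ Φ ∧ (f fun _ => a).Dom}

end NPlace

/-- `T_n(Φ)`: the least set of transformations of `n`-place functions containing
the identity and closed under `t ↦ (f ↦ α[ω̄|ᵢ t f])` (`α, ωⱼ ∈ Φ`) and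
`t ↦ (f ↦ Rᵢ (t f))`. -/
inductive IsTnF {n : ℕ} {A : Type u} (Φ : Set (NPlace n A)) :
    (NPlace n A → NPlace n A) → Prop
  | id : IsTnF Φ id
  | op (t : NPlace n A → NPlace n A) (α : NPlace n A) (ω : Fin n → NPlace n A)
      (i : Fin n) : α ∈ Φ → (∀ j, ω j ∈ Φ) → IsTnF Φ t →
      IsTnF Φ fun f => NPlace.comp α (Function.update ω i (t f))
  | proj (t : NPlace n A → NPlace n A) (i : Fin n) :
      IsTnF Φ t → IsTnF Φ fun f => NPlace.Ri i (t f)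


lemma comp_congr_aux {n : ℕ} {A : Type u} (f : NPlace n A)
    (g g' : Fin n → NPlace n A) (a : Fin n → A) (h : ∀ i, g i a = g' i a) :
    NPlace.comp f g a = NPlace.comp f g' a := by
  have : (⟨∀ i, (g i a).Dom, fun hd i => (g i a).get (hd i)⟩ : Part (Fin n → A)) =
      ⟨∀ i, (g' i a).Dom, fun hd i => (g' i a).get (hd i)⟩ := by
    apply Part.ext'
    · exact forall_congr' fun i => by rw [h i]
    · intro h1 h2
      funext i
      exact Part.mem_unique ((h i) ▸ Part.get_mem (h1 i)) (Part.get_mem (h2 i))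
  simp only [NPlace.comp, this]

/-- The stabilizer `H^a_Φ` is a normal v-complex: `f, g ∈ H^a_Φ` and
`t f ∈ H^a_Φ` imply `t g ∈ H^a_Φ` for every `t ∈ T_n(Φ)`. -/
theorem stab_normalVComplex {n : ℕ} {A : Type u} (Φ : Set (NPlace n A))
    (hcomp : ∀ f ∈ Φ, ∀ g : Fin n → NPlace n A, (∀ i, g i ∈ Φ) →
      NPlace.comp f g ∈ Φ)
    (hR : ∀ i : Fin n, ∀ f ∈ Φ, NPlace.Ri i f ∈ Φ)
    (a : A) :
    ∀ f ∈ NPlace.stab Φ a, ∀ g ∈ NPlace.stab Φ a,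
      ∀ t : NPlace n A → NPlace n A, IsTnF Φ t →
        t f ∈ NPlace.stab Φ a → t g ∈ NPlace.stab Φ a := by
  intro f hf g hg t ht htf
  -- t preserves membership in Φ, and t f, t g agree at (a,…,a)
  have key : ∀ t : NPlace n A → NPlace n A, IsTnF Φ t →
      (∀ h ∈ Φ, t h ∈ Φ) ∧ (t f fun _ => a) = (t g fun _ => a) := by
    intro t ht
    induction ht with
    | id =>
      refine ⟨fun h hh => hh, ?_⟩
      have hf' : (f fun _ => a) = Part.some a := Part.eq_some_iff.mpr hf.2
      have hg' : (g fun _ => a) = Part.some a := Part.eq_some_iff.mpr hg.2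
      simp [hf', hg']
    | op t α ω i hα hω _ ih =>
      refine ⟨?_, ?_⟩
      · intro h hh
        refine hcomp α hα _ fun j => ?_
        rcases eq_or_ne j i with rfl | hj
        · simpa using ih.1 h hh
        · simpa [Function.update_of_ne hj] using hω j
      · refine comp_congr_aux α _ _ _ fun j => ?_
        rcases eq_or_ne j i with rfl | hj
        · simpa using ih.2
        · simp [Function.update_of_ne hj]
    | proj t i _ ih =>
      exact ⟨fun h hh => hR i _ (ih.1 h hh), by simp [NPlace.Ri, ih.2]⟩
  obtain ⟨hΦ, heq⟩ := key t ht
  exact ⟨hΦ g hg.1, heq ▸ htf.2⟩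
end

section
/- Let Φ be a set of n-place functions on a set A closed under Menger composition and under each operation R_i, let a ∈ A, and let f, g, α ∈ Φ, ω_1,…,ω_n ∈ Φ, i ∈ {1,…,n}. If f = g[R_1 f … R_n f] and (a,…,a) ∈ dom f, and α[ω_1…ω_{i−1} g ω_{i+1}…ω_n] ∈ H^a_Φ, then α[ω_1…ω_{i−1} f ω_{i+1}…ω_n] ∈ H^a_Φ. Moreover, under the same hypotheses on f and g, if g ∈ H^a_Φ then f ∈ H^a_Φ. -/
universe u

theorem NPlace.comp_congr_at {n : ℕ} {A : Type u} (f : NPlace n A)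
    (g g' : Fin n → NPlace n A) (x : Fin n → A)
    (h : ∀ j, g j x = g' j x) :
    NPlace.comp f g x = NPlace.comp f g' x := by
  unfold NPlace.comp
  congr 1
  exact Part.ext' (forall_congr' fun j => by rw [h j])
    (fun h1 h2 => funext fun j => by simp only [h j])

/-- If `f = g[R₁f…Rₙf]` and `(a,…,a) ∈ dom f`, then
`α[ω̄|ᵢ g] ∈ H^a_Φ → α[ω̄|ᵢ f] ∈ H^a_Φ`; moreover `g ∈ H^a_Φ → f ∈ H^a_Φ`. -/
theorem stab_restriction {n : ℕ} {A : Type u} (Φ : Set (NPlace n A))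
    (hcomp : ∀ f ∈ Φ, ∀ g : Fin n → NPlace n A, (∀ i, g i ∈ Φ) →
      NPlace.comp f g ∈ Φ)
    (hR : ∀ i : Fin n, ∀ f ∈ Φ, NPlace.Ri i f ∈ Φ)
    (a : A) (f g α : NPlace n A) (ω : Fin n → NPlace n A) (i : Fin n)
    (hf : f ∈ Φ) (hg : g ∈ Φ) (hα : α ∈ Φ) (hω : ∀ j, ω j ∈ Φ)
    (heq : f = NPlace.comp g fun j => NPlace.Ri j f)
    (hdom : (f fun _ => a).Dom) :
    (NPlace.comp α (Function.update ω i g) ∈ NPlace.stab Φ a →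
      NPlace.comp α (Function.update ω i f) ∈ NPlace.stab Φ a) ∧
    (g ∈ NPlace.stab Φ a → f ∈ NPlace.stab Φ a) := by
  have key : (f fun _ => a) = (g fun _ => a) := by
    conv_lhs => rw [heq]
    unfold NPlace.comp NPlace.Ri
    have : (⟨∀ j : Fin n, ((f fun _ => a).map fun _ => (fun _ : Fin n => a) j).Dom,
        fun h j => ((f fun _ => a).map fun _ => (fun _ : Fin n => a) j).get (h j)⟩ :
        Part (Fin n → A)) = Part.some fun _ => a := by
      apply Part.ext'
      · simp [Part.map_Dom, hdom]
      · intro h1 h2; funext j; simp [Part.map]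
    rw [this]; exact Part.bind_some _ g
  have hupd : ∀ j, (Function.update ω i f j) (fun _ => a)
      = (Function.update ω i g j) (fun _ => a) := by
    intro j
    by_cases hj : j = i
    · subst hj; simp [key]
    · simp [Function.update_of_ne hj]
  constructor
  · rintro ⟨_, hval⟩
    refine ⟨hcomp α hα _ (fun j => ?_), ?_⟩
    · by_cases hj : j = i
      · subst hj; simpa using hf
      · simpa [Function.update_of_ne hj] using hω j
    · rw [NPlace.comp_congr_at α _ _ _ hupd]; exact hval
  · rintro ⟨_, hval⟩
    exact ⟨hf, key ▸ hval⟩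
end

section
/- Let 𝒢 = (G, o, R_1, …, R_n) be a functional Menger system of rank n. Every l-unitary normal v-complex H ⊆ G is v-unitary: if x[y_1…y_n] ∈ H and y_1,…,y_n ∈ H, then x ∈ H. -/
universe u

/-- Every l-unitary normal v-complex is v-unitary. -/
theorem lUnitary_normal_vUnitary {n : ℕ} {G : Type u} (M : MengerSystem n G)
    (H : Set G) (hlu : M.LUnitary H) (hnc : M.NormalVComplex H) :
    M.VUnitary H := by
  intro x y hxy hy
  rcases n with _ | m
  · have hyx : y = fun i => M.R i x := funext fun i => i.elim0
    rw [hyx, M.A2] at hxy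
    exact hxy
  · -- replace slots one by one with y 0
    have key : ∀ k : ℕ, k ≤ m + 1 →
        M.o x (fun i => if (i : ℕ) < k then y 0 else y i) ∈ H := by
      intro k
      induction k with
      | zero => intro _; simpa using hxy
      | succ k ih =>
        intro hk
        have hk' : k < m + 1 := hk
        have ihk := ih (Nat.le_of_lt hk')
        set b : Fin (m + 1) → G := fun i => if (i : ℕ) < k then y 0 else y i with hb
        have ht : M.IsTn (fun z => M.o x (Function.update b ⟨k, hk'⟩ z)) := by
          simpa using MengerSystem.IsTn.op (M := M) id x b ⟨k, hk'⟩ MengerSystem.IsTn.id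
        have h1 : M.o x (Function.update b ⟨k, hk'⟩ (y ⟨k, hk'⟩)) ∈ H := by
          have : Function.update b ⟨k, hk'⟩ (y ⟨k, hk'⟩) = b := by
            funext i
            rcases eq_or_ne i ⟨k, hk'⟩ with h | h
            · subst h; simp [hb]
            · simp [Function.update_of_ne h]
          rw [this]; exact ihk
        have h2 := hnc _ ht (y ⟨k, hk'⟩) (hy _) (y 0) (hy 0) h1
        have : Function.update b ⟨k, hk'⟩ (y 0)
            = fun i : Fin (m + 1) => if (i : ℕ) < k + 1 then y 0 else y i := by
          funext i
          rcases eq_or_ne i ⟨k, hk'⟩ with h | h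
          · subst h; simp
          · have hik : (i : ℕ) ≠ k := fun hh => h (Fin.ext hh)
            have : ((i : ℕ) < k + 1) ↔ ((i : ℕ) < k) := by omega
            simp [Function.update_of_ne h, this, hb]
        rw [this] at h2
        exact h2
    have hall := key (m + 1) le_rfl
    have : (fun i : Fin (m + 1) => if (i : ℕ) < m + 1 then y 0 else y i)
        = fun _ => y 0 := by
      funext i; simp [i.isLt]
    rw [this] at hall
    exact hlu x (y 0) hall (hy 0)
end
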